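/- arXiv:1403.7982 — 3 statements merged into one kernel-verified Lean document; each statement's English description precedes it below -/
import Mathlib

section
/- Let λ be a partition of n = p + q with ℓ parts and set λ_{ℓ+1} = 0. Suppose 1 ≤ h ≤ ℓ satisfies λ_h − λ_{h+1} ≥ 2, and let λ' = (λ_1 − 2, …, λ_h − 2, λ_{h+1}, …, λ_ℓ) (discarding parts equal to 0), i.e., λ' is obtained from λ by removing two successive columns of the same length h. Then the number of connected components of Γ(λ;p,q) equals the number of connected components of Γ(λ'; p−h, q−h). (If λ' is the empty partition, then Γ(λ';p−h,q−h) is interpreted as the one-point graph when p = q = h and the empty graph otherwise.) -/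
open Finset

/-- A partition of `n`, given by the function `l` listing its parts in weakly
decreasing order: `l j = λ_j` is the `j`-th part for `1 ≤ j ≤ len`, and
`l j = 0` for `j > len`. -/
structure PartitionData : Type where
  l : ℕ → ℕ
  len : ℕ
  anti : ∀ j, 1 ≤ j → l (j + 1) ≤ l j
  pos : ∀ j, 1 ≤ j → (0 < l j ↔ j ≤ len)

namespace PartitionData

/-- The multiplicity `m(i)` of `i` as a part of the partition. -/
def mult (P : PartitionData) (i : ℕ) : ℕ :=
  ((Finset.Icc 1 P.len).filter (fun j => P.l j = i)).card

/-- The finite set of (distinct) parts of the partition. -/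
def partsSet (P : PartitionData) : Finset ℕ :=
  (Finset.Icc 1 P.len).image P.l

/-- The sum of the parts (i.e. the number `n` the partition partitions). -/
def boxSum (P : PartitionData) : ℕ := ∑ j ∈ Finset.Icc 1 P.len, P.l j

/-- The number of odd parts of the partition. -/
def oddCount (P : PartitionData) : ℕ :=
  ((Finset.Icc 1 P.len).filter (fun j => Odd (P.l j))).card

end PartitionData

/-- A signed Young diagram of shape `P` and signature `(p, q)`, encoded by the
function `f` sending each part length `i` to `m_T⁺(i)`, the number of rows of
length `i` whose leading sign is `+`.  A row of length `i` with leading sign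
`+` has `(i+1)/2` plus-boxes and `i/2` minus-boxes, and vice versa. -/
structure SYD (P : PartitionData) (p q : ℕ) : Type where
  f : ℕ → ℕ
  le_mult : ∀ i, f i ≤ P.mult i
  plus_eq : ∑ i ∈ P.partsSet, (f i * ((i + 1) / 2) + (P.mult i - f i) * (i / 2)) = p
  minus_eq : ∑ i ∈ P.partsSet, (f i * (i / 2) + (P.mult i - f i) * ((i + 1) / 2)) = q

/-- `i` and `j` are consecutive distinct parts: `i > j` with no part strictly
in between (so if the distinct parts are `i_1 > ⋯ > i_k`, the pairs are
`(i_r, i_{r+1})`). -/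
def Consec (P : PartitionData) (i j : ℕ) : Prop :=
  i ∈ P.partsSet ∧ j ∈ P.partsSet ∧ j < i ∧ ∀ x ∈ P.partsSet, ¬ (j < x ∧ x < i)

/-- `j` is the smallest part `i_k`. -/
def IsMinPart (P : PartitionData) (j : ℕ) : Prop :=
  j ∈ P.partsSet ∧ ∀ x ∈ P.partsSet, j ≤ x

/-- Adjacency of signed Young diagrams with step `c`:
`π(T) - π(T') ∈ {±c(e_r - e_{r+1})} ∪ {±c e_k}` in the coordinates indexed by
the distinct parts `i_1 > ⋯ > i_k`. -/
def AdjRel (P : PartitionData) {p q : ℕ} (c : ℕ) (T T' : SYD P p q) : Prop :=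
  (∃ i j, Consec P i j ∧ (∀ x, x ≠ i → x ≠ j → T.f x = T'.f x) ∧
    ((T.f i = T'.f i + c ∧ T'.f j = T.f j + c) ∨
      (T'.f i = T.f i + c ∧ T.f j = T'.f j + c)))
  ∨ (∃ j, IsMinPart P j ∧ (∀ x, x ≠ j → T.f x = T'.f x) ∧
      (T.f j = T'.f j + c ∨ T'.f j = T.f j + c))

/-- The orbit graph `Γ(λ;p,q)` (type AIII). -/
def orbitGraph (P : PartitionData) (p q : ℕ) : SimpleGraph (SYD P p q) :=
  SimpleGraph.fromRel (AdjRel P 1)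

namespace Stmt7Aux
open PartitionData

lemma mem_parts {P : PartitionData} {x : ℕ} :
    x ∈ P.partsSet ↔ ∃ j, 1 ≤ j ∧ j ≤ P.len ∧ P.l j = x := by
  simp [PartitionData.partsSet, Finset.mem_image, Finset.mem_Icc, and_assoc]

lemma one_le_of_mem_parts {P : PartitionData} {x : ℕ} (hx : x ∈ P.partsSet) : 1 ≤ x := by
  obtain ⟨j, hj1, hj2, rfl⟩ := mem_parts.1 hx
  exact (P.pos j hj1).2 hj2

lemma l_anti' (P : PartitionData) {j j' : ℕ} (h1 : 1 ≤ j) (h2 : j ≤ j') : P.l j' ≤ P.l j := by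
  induction j' with
  | zero => omega
  | succ n ih =>
    rcases Nat.lt_or_ge j (n+1) with hlt | hge
    · exact le_trans (P.anti n (by omega)) (ih (by omega))
    · have : j = n + 1 := by omega
      subst this; exact le_rfl

lemma mult_eq_zero {P : PartitionData} {x : ℕ} (hx : x ∉ P.partsSet) : P.mult x = 0 := by
  rw [PartitionData.mult, Finset.card_eq_zero, Finset.filter_eq_empty_iff]
  intro j hj hl
  exact hx (mem_parts.2 ⟨j, (Finset.mem_Icc.1 hj).1, (Finset.mem_Icc.1 hj).2, hl⟩)

lemma mult_pos_iff {P : PartitionData} {x : ℕ} : 0 < P.mult x ↔ x ∈ P.partsSet := by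
  constructor
  · intro hm
    by_contra hx
    rw [mult_eq_zero hx] at hm; omega
  · intro hx
    obtain ⟨j, hj1, hj2, rfl⟩ := mem_parts.1 hx
    rw [PartitionData.mult]
    exact Finset.card_pos.2 ⟨j, Finset.mem_filter.2 ⟨Finset.mem_Icc.2 ⟨hj1, hj2⟩, rfl⟩⟩

lemma sum_mult_mul (P : PartitionData) (w : ℕ → ℕ) :
    ∑ x ∈ P.partsSet, P.mult x * w x = ∑ j ∈ Finset.Icc 1 P.len, w (P.l j) := by
  rw [Finset.sum_comp w P.l]
  rfl

lemma sum_mult_id (P : PartitionData) :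
    ∑ x ∈ P.partsSet, P.mult x * x = P.boxSum := by
  have := sum_mult_mul P id
  simpa [PartitionData.boxSum] using this

/-- Bundled hypotheses of the theorem (minus `hn`). -/
structure Ctx (P P' : PartitionData) (h t : ℕ) : Prop where
  h1 : 1 ≤ h
  hle : h ≤ P.len
  ht : P.l (h+1) = t
  hcol : t + 2 ≤ P.l h
  hl1 : ∀ j, 1 ≤ j → j ≤ h → P'.l j = P.l j - 2
  hl2 : ∀ j, h < j → P'.l j = P.l j

namespace Ctx
variable {P P' : PartitionData} {h t : ℕ} (C : Ctx P P' h t)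
include C

lemma big_l {j : ℕ} (hj1 : 1 ≤ j) (hjh : j ≤ h) : t + 2 ≤ P.l j :=
  le_trans C.hcol (l_anti' P hj1 hjh)

lemma small_l {j : ℕ} (hjh : h < j) : P.l j ≤ t := by
  have := l_anti' P (j := h+1) (j' := j) (by omega) (by omega)
  have := C.ht
  omega

lemma t_mem (ht1 : 1 ≤ t) : t ∈ P.partsSet := by
  refine mem_parts.2 ⟨h+1, by omega, ?_, C.ht⟩
  have := C.ht
  exact (P.pos (h+1) (by omega)).1 (by omega)

lemma parts_gap {x : ℕ} (hx : x ∈ P.partsSet) : x ≤ t ∨ t + 2 ≤ x := by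
  obtain ⟨j, hj1, hj2, rfl⟩ := mem_parts.1 hx
  rcases Nat.lt_or_ge h j with hj | hj
  · exact Or.inl (C.small_l hj)
  · exact Or.inr (C.big_l hj1 hj)

lemma big_mem {x : ℕ} (hx : x ∈ P.partsSet) (hxt : t < x) :
    ∃ j, 1 ≤ j ∧ j ≤ h ∧ P.l j = x := by
  obtain ⟨j, hj1, hj2, rfl⟩ := mem_parts.1 hx
  refine ⟨j, hj1, ?_, rfl⟩
  by_contra hjh
  have := C.small_l (j := j) (by omega)
  omega

lemma mult'_eq {x : ℕ} (hx : 1 ≤ x) :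
    P'.mult x = (if t ≤ x then P.mult (x+2) else 0) + (if x ≤ t then P.mult x else 0) := by
  have hstepA : ((Finset.Icc 1 P'.len).filter (fun j => P'.l j = x)) =
      ((Finset.Icc 1 P.len).filter (fun j => P'.l j = x)) := by
    ext j
    simp only [Finset.mem_filter, Finset.mem_Icc]
    constructor
    · rintro ⟨⟨hj1, hj2⟩, hl⟩
      refine ⟨⟨hj1, ?_⟩, hl⟩
      have hlj : 0 < P.l j := by
        rcases Nat.lt_or_ge h j with hj | hj
        · rw [← C.hl2 j hj, hl]; omega
        · have := C.hl1 j hj1 hj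
          have := C.big_l hj1 hj
          omega
      exact (P.pos j hj1).1 hlj
    · rintro ⟨⟨hj1, hj2⟩, hl⟩
      refine ⟨⟨hj1, ?_⟩, hl⟩
      exact (P'.pos j hj1).1 (by omega)
  have key : ∀ j ∈ Finset.Icc 1 P.len,
      (if P'.l j = x then 1 else 0) =
      ((if t ≤ x then (if P.l j = x + 2 then 1 else 0) else 0)
        + (if x ≤ t then (if P.l j = x then 1 else 0) else 0)) := by
    intro j hj
    rw [Finset.mem_Icc] at hj
    rcases Nat.lt_or_ge h j with hjh | hjh
    · have h2 := C.hl2 j hjh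
      have h3 := C.small_l hjh
      split_ifs <;> omega
    · have h2 := C.hl1 j hj.1 hjh
      have h3 := C.big_l hj.1 hjh
      split_ifs <;> omega
  have : P'.mult x = ∑ j ∈ Finset.Icc 1 P.len, (if P'.l j = x then 1 else 0) := by
    rw [PartitionData.mult, hstepA, Finset.card_filter _ _]
  rw [this, Finset.sum_congr rfl key, Finset.sum_add_distrib]
  congr 1
  · split_ifs with hc
    · rw [PartitionData.mult, Finset.card_filter _ _]
    · simp
  · split_ifs with hc
    · rw [PartitionData.mult, Finset.card_filter _ _]
    · simp

lemma mem_parts' {x : ℕ} (hx : 1 ≤ x) :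
    x ∈ P'.partsSet ↔ ((t ≤ x ∧ x + 2 ∈ P.partsSet) ∨ (x ≤ t ∧ x ∈ P.partsSet)) := by
  rw [← mult_pos_iff, C.mult'_eq hx, ← mult_pos_iff (P := P) (x := x+2),
    ← mult_pos_iff (P := P) (x := x)]
  split_ifs <;> omega

lemma sum_big_mult : ∑ x ∈ P.partsSet.filter (fun x => t < x), P.mult x = h := by
  have hfib : ∀ x ∈ P.partsSet.filter (fun x => t < x),
      P.mult x = ((Finset.Icc 1 h).filter (fun j => P.l j = x)).card := by
    intro x hx
    rw [Finset.mem_filter] at hx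
    rw [PartitionData.mult]
    congr 1
    ext j
    simp only [Finset.mem_filter, Finset.mem_Icc]
    constructor
    · rintro ⟨⟨hj1, hj2⟩, hl⟩
      refine ⟨⟨hj1, ?_⟩, hl⟩
      by_contra hc
      have := C.small_l (j := j) (by omega)
      omega
    · rintro ⟨⟨hj1, hj2⟩, hl⟩
      have := C.hle
      exact ⟨⟨hj1, by omega⟩, hl⟩
  rw [Finset.sum_congr rfl hfib]
  rw [← Finset.card_eq_sum_card_fiberwise (f := P.l) (s := Finset.Icc 1 h)
    (t := P.partsSet.filter (fun x => t < x)) ?_]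
  · simp [Nat.card_Icc]
  · intro j hj
    rw [Finset.mem_coe, Finset.mem_Icc] at hj
    have := C.hle
    rw [Finset.mem_coe]
    refine Finset.mem_filter.2 ⟨mem_parts.2 ⟨j, hj.1, by omega, rfl⟩, ?_⟩
    exact lt_of_lt_of_le (by omega) (C.big_l hj.1 hj.2)


end Ctx

lemma nf_plus {a m i : ℕ} (h : a ≤ m) :
    a * ((i+1)/2) + (m - a) * (i/2) = a * (i % 2) + m * (i/2) := by
  obtain ⟨k, rfl⟩ := Nat.exists_eq_add_of_le h
  have e : (i+1)/2 = i/2 + i%2 := by omega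
  rw [e, Nat.add_sub_cancel_left]; ring

lemma nf_minus {a m i : ℕ} (h : a ≤ m) :
    a * (i/2) + (m - a) * ((i+1)/2) = (m - a) * (i % 2) + m * (i/2) := by
  obtain ⟨k, rfl⟩ := Nat.exists_eq_add_of_le h
  have e : (i+1)/2 = i/2 + i%2 := by omega
  rw [e, Nat.add_sub_cancel_left]; ring

lemma plus_norm {Q : PartitionData} {p q : ℕ} (T : SYD Q p q) :
    ∑ i ∈ Q.partsSet, (T.f i * (i % 2) + Q.mult i * (i / 2)) = p := by
  calc ∑ i ∈ Q.partsSet, (T.f i * (i % 2) + Q.mult i * (i / 2))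
      = ∑ i ∈ Q.partsSet, (T.f i * ((i + 1) / 2) + (Q.mult i - T.f i) * (i / 2)) :=
        Finset.sum_congr rfl fun i _ => (nf_plus (T.le_mult i)).symm
    _ = p := T.plus_eq

lemma minus_norm {Q : PartitionData} {p q : ℕ} (T : SYD Q p q) :
    ∑ i ∈ Q.partsSet, ((Q.mult i - T.f i) * (i % 2) + Q.mult i * (i / 2)) = q := by
  calc ∑ i ∈ Q.partsSet, ((Q.mult i - T.f i) * (i % 2) + Q.mult i * (i / 2))
      = ∑ i ∈ Q.partsSet, (T.f i * (i / 2) + (Q.mult i - T.f i) * ((i + 1) / 2)) :=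
        Finset.sum_congr rfl fun i _ => by rw [nf_minus (T.le_mult i), add_comm]
    _ = q := T.minus_eq

/-- Build an `SYD` from the normalized sum conditions. -/
def mkSYD {Q : PartitionData} {p q : ℕ} (g : ℕ → ℕ) (hg : ∀ i, g i ≤ Q.mult i)
    (hplus : ∑ i ∈ Q.partsSet, (g i * (i % 2) + Q.mult i * (i / 2)) = p)
    (hminus : ∑ i ∈ Q.partsSet, ((Q.mult i - g i) * (i % 2) + Q.mult i * (i / 2)) = q) :
    SYD Q p q where
  f := g
  le_mult := hg
  plus_eq := by
    rw [← hplus]; exact Finset.sum_congr rfl fun i _ => nf_plus (hg i)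
  minus_eq := by
    rw [← hminus]; exact Finset.sum_congr rfl fun i _ => nf_minus (hg i)

@[simp] lemma mkSYD_f {Q : PartitionData} {p q : ℕ} (g hg hplus hminus) :
    (mkSYD (Q := Q) (p := p) (q := q) g hg hplus hminus).f = g := rfl

lemma SYD.fext {Q : PartitionData} {p q : ℕ} {T U : SYD Q p q} (hf : T.f = U.f) : T = U := by
  cases T; cases U; cases hf; rfl

lemma parts_zero {Q : PartitionData} : (0 : ℕ) ∉ Q.partsSet := fun hx => by
  have := one_le_of_mem_parts hx; omega

lemma mult_zero {Q : PartitionData} : Q.mult 0 = 0 := mult_eq_zero parts_zero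

/-- The map on leading-sign data induced by deleting two columns of height `h`. -/
def phiF (t : ℕ) (g : ℕ → ℕ) : ℕ → ℕ := fun x =>
  if x = 0 then 0
  else (if t ≤ x then g (x+2) else 0) + (if x ≤ t then g x else 0)

namespace Ctx
variable {P P' : PartitionData} {h t : ℕ} (C : Ctx P P' h t)
include C

lemma sum_phiF (w g : ℕ → ℕ) (hw : w 0 = 0) (hg : ∀ x, g x ≤ P.mult x) :
    ∑ x ∈ P'.partsSet, phiF t g x * w x
      = ∑ x ∈ P.partsSet, g x * w (if t < x then x - 2 else x) := by
  classical
  have hsplit : ∀ x ∈ P'.partsSet, phiF t g x * w x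
      = (if t ≤ x then g (x+2) else 0) * w x + (if x ≤ t then g x else 0) * w x := by
    intro x hx
    have hx1 := one_le_of_mem_parts hx
    rw [phiF, if_neg (by omega : ¬ x = 0), add_mul]
  rw [Finset.sum_congr rfl hsplit, Finset.sum_add_distrib]
  have piece2 : ∑ x ∈ P'.partsSet, (if x ≤ t then g x else 0) * w x
      = ∑ x ∈ P.partsSet.filter (fun x => ¬ t < x), g x * w x := by
    have e1 : ∀ x ∈ P'.partsSet, (if x ≤ t then g x else 0) * w x
        = if x ≤ t then g x * w x else 0 := by
      intro x _; split_ifs <;> simp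
    rw [Finset.sum_congr rfl e1, ← Finset.sum_filter]
    · congr 1
      ext x
      simp only [Finset.mem_filter, not_lt]
      constructor
      · rintro ⟨hx, hxt⟩
        have hx1 := one_le_of_mem_parts hx
        rcases (C.mem_parts' hx1).1 hx with ⟨h1, h2⟩ | ⟨h1, h2⟩
        · have : x = t := by omega
          subst this
          exact ⟨C.t_mem hx1, le_rfl⟩
        · exact ⟨h2, hxt⟩
      · rintro ⟨hx, hxt⟩
        have hx1 := one_le_of_mem_parts hx
        exact ⟨(C.mem_parts' hx1).2 (Or.inr ⟨hxt, hx⟩), hxt⟩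
  have piece1 : ∑ x ∈ P'.partsSet, (if t ≤ x then g (x+2) else 0) * w x
      = ∑ x ∈ P.partsSet.filter (fun x => t < x), g x * w (x - 2) := by
    have e1 : ∀ x ∈ P'.partsSet, (if t ≤ x then g (x+2) else 0) * w x
        = if t ≤ x then g (x+2) * w x else 0 := by
      intro x _; split_ifs <;> simp
    rw [Finset.sum_congr rfl e1, ← Finset.sum_filter]
    have hA0 : ∑ x ∈ P'.partsSet.filter (fun x => t ≤ x), g (x+2) * w x
        = ∑ x ∈ P'.partsSet.filter (fun x => t ≤ x ∧ x + 2 ∈ P.partsSet), g (x+2) * w x := by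
      symm
      refine Finset.sum_subset (fun x hx => ?_) (fun x hx hx0 => ?_)
      · rw [Finset.mem_filter] at hx ⊢
        exact ⟨hx.1, hx.2.1⟩
      rw [Finset.mem_filter] at hx hx0
      have : x + 2 ∉ P.partsSet := by tauto
      have hg0 := hg (x+2)
      rw [mult_eq_zero this] at hg0
      have hz : g (x+2) = 0 := by omega
      rw [hz, zero_mul]
    have hB0 : ∑ x ∈ P.partsSet.filter (fun x => t < x), g x * w (x - 2)
        = ∑ x ∈ P.partsSet.filter (fun x => t < x ∧ 3 ≤ x), g x * w (x - 2) := by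
      symm
      refine Finset.sum_subset (fun x hx => ?_) (fun x hx hx0 => ?_)
      · rw [Finset.mem_filter] at hx ⊢
        exact ⟨hx.1, hx.2.1⟩
      rw [Finset.mem_filter] at hx hx0
      have : x - 2 = 0 := by
        rcases hx with ⟨hx1, hx2⟩
        by_contra hc
        exact hx0 ⟨hx1, hx2, by omega⟩
      rw [this, hw, mul_zero]
    rw [hA0, hB0]
    refine Finset.sum_nbij' (fun x => x + 2) (fun y => y - 2) ?_ ?_ ?_ ?_ ?_
    · intro a ha
      rw [Finset.mem_filter] at ha ⊢
      obtain ⟨ha', hta, hmem⟩ := ha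
      have h1 := one_le_of_mem_parts ha'
      exact ⟨hmem, by omega, by omega⟩
    · intro a ha
      rw [Finset.mem_filter] at ha ⊢
      obtain ⟨ha', hta, h3⟩ := ha
      have hgap := C.parts_gap ha'
      have e2 : a - 2 + 2 = a := by omega
      refine ⟨(C.mem_parts' (by omega)).2 (Or.inl ⟨by omega, by rw [e2]; exact ha'⟩),
        by omega, by rw [e2]; exact ha'⟩
    · intro a _
      show a + 2 - 2 = a
      omega
    · intro a ha
      rw [Finset.mem_filter] at ha
      show a - 2 + 2 = a
      omega
    · intro a _; rfl
  rw [piece1, piece2]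
  rw [← Finset.sum_filter_add_sum_filter_not P.partsSet (fun x => t < x)
    (fun x => g x * w (if t < x then x - 2 else x))]
  congr 1
  · refine Finset.sum_congr rfl fun x hx => ?_
    rw [Finset.mem_filter] at hx
    rw [if_pos hx.2]
  · refine Finset.sum_congr rfl fun x hx => ?_
    rw [Finset.mem_filter] at hx
    rw [if_neg hx.2]


lemma phiF_mult {x : ℕ} (hx : 1 ≤ x) : phiF t P.mult x = P'.mult x := by
  rw [phiF, if_neg (by omega : ¬ x = 0), C.mult'_eq hx]

lemma sum_plus_shift (g : ℕ → ℕ) (hg : ∀ x, g x ≤ P.mult x) :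
    ∑ x ∈ P'.partsSet, (phiF t g x * (x % 2) + P'.mult x * (x / 2)) + h
      = ∑ x ∈ P.partsSet, (g x * (x % 2) + P.mult x * (x / 2)) := by
  rw [Finset.sum_add_distrib, Finset.sum_add_distrib]
  have A : ∑ x ∈ P'.partsSet, phiF t g x * (x % 2) = ∑ x ∈ P.partsSet, g x * (x % 2) := by
    rw [C.sum_phiF (fun x => x % 2) g rfl hg]
    refine Finset.sum_congr rfl fun x hx => ?_
    congr 1
    rcases C.parts_gap hx with hc | hc
    · rw [if_neg (by omega)]
    · rw [if_pos (by omega)]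
      omega
  have B : ∑ x ∈ P'.partsSet, P'.mult x * (x / 2) + h
      = ∑ x ∈ P.partsSet, P.mult x * (x / 2) := by
    have B1 : ∑ x ∈ P'.partsSet, P'.mult x * (x / 2)
        = ∑ x ∈ P.partsSet, P.mult x * ((if t < x then x - 2 else x) / 2) := by
      refine Eq.trans ?_ (C.sum_phiF (fun x => x / 2) P.mult rfl (fun x => le_rfl))
      refine Finset.sum_congr rfl fun x hx => ?_
      rw [C.phiF_mult (one_le_of_mem_parts hx)]
    rw [B1, ← C.sum_big_mult]
    rw [← Finset.sum_filter_add_sum_filter_not P.partsSet (fun x => t < x)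
      (fun x => P.mult x * ((if t < x then x - 2 else x) / 2)),
      ← Finset.sum_filter_add_sum_filter_not P.partsSet (fun x => t < x)
      (fun x => P.mult x * (x / 2))]
    have e1 : ∑ x ∈ P.partsSet.filter (fun x => t < x),
          P.mult x * ((if t < x then x - 2 else x) / 2)
        + ∑ x ∈ P.partsSet.filter (fun x => t < x), P.mult x
        = ∑ x ∈ P.partsSet.filter (fun x => t < x), P.mult x * (x / 2) := by
      rw [← Finset.sum_add_distrib]
      refine Finset.sum_congr rfl fun x hx => ?_
      rw [Finset.mem_filter] at hx
      have hgap := C.parts_gap hx.1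
      rw [if_pos hx.2]
      have e : (x - 2) / 2 + 1 = x / 2 := by omega
      calc P.mult x * ((x-2)/2) + P.mult x = P.mult x * ((x-2)/2 + 1) := by ring
        _ = P.mult x * (x / 2) := by rw [e]
    have e2 : ∑ x ∈ P.partsSet.filter (fun x => ¬ t < x),
          P.mult x * ((if t < x then x - 2 else x) / 2)
        = ∑ x ∈ P.partsSet.filter (fun x => ¬ t < x), P.mult x * (x / 2) := by
      refine Finset.sum_congr rfl fun x hx => ?_
      rw [Finset.mem_filter] at hx
      rw [if_neg hx.2]
    rw [e2] at *
    omega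
  omega

lemma phiF_le (g : ℕ → ℕ) (hg : ∀ x, g x ≤ P.mult x) (x : ℕ) : phiF t g x ≤ P'.mult x := by
  rcases Nat.eq_zero_or_pos x with rfl | hx
  · simp [phiF]
  · rw [C.mult'_eq hx, phiF, if_neg (by omega : ¬ x = 0)]
    have := hg (x+2); have := hg x
    split_ifs <;> omega

lemma phiF_sub (g : ℕ → ℕ) (hg : ∀ x, g x ≤ P.mult x) (x : ℕ) :
    phiF t (fun y => P.mult y - g y) x = P'.mult x - phiF t g x := by
  rcases Nat.eq_zero_or_pos x with rfl | hx
  · simp [phiF, mult_zero]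
  · rw [C.mult'_eq hx, phiF, phiF, if_neg (by omega : ¬ x = 0), if_neg (by omega : ¬ x = 0)]
    have := hg (x+2); have := hg x
    split_ifs <;> omega

variable {p q : ℕ}

/-- The induced map on signed Young diagrams. -/
def phi (T : SYD P p q) : SYD P' (p - h) (q - h) :=
  mkSYD (phiF t T.f) (C.phiF_le T.f T.le_mult)
    (by
      have := C.sum_plus_shift T.f T.le_mult
      rw [plus_norm T] at this
      omega)
    (by
      have h2 := C.sum_plus_shift (fun y => P.mult y - T.f y) (fun y => Nat.sub_le _ _)
      rw [minus_norm T] at h2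
      have e : ∑ x ∈ P'.partsSet, ((P'.mult x - phiF t T.f x) * (x % 2) + P'.mult x * (x / 2))
          = ∑ x ∈ P'.partsSet, (phiF t (fun y => P.mult y - T.f y) x * (x % 2)
              + P'.mult x * (x / 2)) := by
        refine Finset.sum_congr rfl fun x _ => ?_
        rw [C.phiF_sub T.f T.le_mult]
      rw [e]
      omega)

lemma phi_f (T : SYD P p q) : (C.phi T).f = phiF t T.f := rfl


end Ctx

/-- A canonical section of `phiF`. -/
def psiF (t m2 : ℕ) (g' : ℕ → ℕ) : ℕ → ℕ := fun x =>
  if x < t then g' x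
  else if x = t then g' t - min (g' t) m2
  else if x = t + 2 then min (g' t) m2
  else if x ≤ t + 2 then 0
  else g' (x - 2)

namespace Ctx
variable {P P' : PartitionData} {h t : ℕ} (C : Ctx P P' h t) {p q : ℕ}
include C

lemma psiF_le (g' : ℕ → ℕ) (hg' : ∀ x, g' x ≤ P'.mult x) (x : ℕ) :
    psiF t (P.mult (t+2)) g' x ≤ P.mult x := by
  have h0' : P'.mult 0 = 0 := mult_zero
  rw [psiF]
  split_ifs with c1 c2 c3 c4
  · -- x < t
    rcases Nat.eq_zero_or_pos x with rfl | hx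
    · have := hg' 0; rw [h0'] at this; omega
    · have := hg' x
      rw [C.mult'_eq hx, if_neg (by omega), if_pos (by omega)] at this
      omega
  · -- x = t
    rw [c2]
    rcases Nat.eq_zero_or_pos t with rfl | ht1
    · have := hg' 0; rw [h0'] at this
      omega
    · have := hg' t
      rw [C.mult'_eq ht1, if_pos le_rfl, if_pos le_rfl] at this
      have := Nat.min_le_right (g' t) (P.mult (t+2))
      omega
  · -- x = t + 2
    rw [c3]
    exact Nat.min_le_right _ _
  · exact Nat.zero_le _
  · -- x > t + 2
    have := hg' (x - 2)
    rw [C.mult'_eq (by omega : 1 ≤ x - 2), if_pos (by omega), if_neg (by omega)] at this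
    have e : x - 2 + 2 = x := by omega
    rw [e] at this
    omega

lemma phiF_psiF (g' : ℕ → ℕ) (hg' : ∀ x, g' x ≤ P'.mult x) (x : ℕ) :
    phiF t (psiF t (P.mult (t+2)) g') x = g' x := by
  have h0' : P'.mult 0 = 0 := mult_zero
  have hg0 : g' 0 = 0 := by have := hg' 0; omega
  rcases Nat.eq_zero_or_pos x with rfl | hx
  · rw [phiF, if_pos rfl, hg0]
  rw [phiF, if_neg (by omega)]
  rcases lt_trichotomy x t with hc | hc | hc
  · rw [if_neg (by omega), if_pos (by omega), psiF, if_pos hc, zero_add]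
  · subst hc
    rw [if_pos le_rfl, if_pos le_rfl, psiF, psiF]
    rw [if_neg (by omega), if_neg (by omega), if_pos rfl, if_neg (by omega), if_pos rfl]
    have := Nat.min_le_left (g' x) (P.mult (x+2))
    omega
  · rw [if_pos (by omega), if_neg (by omega), psiF]
    rw [if_neg (by omega), if_neg (by omega), if_neg (by omega), if_neg (by omega)]
    simp

lemma psi_sums (T' : SYD P' (p - h) (q - h)) :
    (∑ x ∈ P.partsSet,
        (psiF t (P.mult (t+2)) T'.f x * (x % 2) + P.mult x * (x / 2)) = (p - h) + h)
    ∧ (∑ x ∈ P.partsSet,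
        ((P.mult x - psiF t (P.mult (t+2)) T'.f x) * (x % 2) + P.mult x * (x / 2))
          = (q - h) + h) := by
  set g := psiF t (P.mult (t+2)) T'.f with hgdef
  have hg : ∀ x, g x ≤ P.mult x := C.psiF_le T'.f T'.le_mult
  constructor
  · have s1 := C.sum_plus_shift g hg
    have e : ∑ x ∈ P'.partsSet, (phiF t g x * (x % 2) + P'.mult x * (x / 2))
        = ∑ x ∈ P'.partsSet, (T'.f x * (x % 2) + P'.mult x * (x / 2)) := by
      refine Finset.sum_congr rfl fun x _ => ?_
      rw [hgdef, C.phiF_psiF T'.f T'.le_mult]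
    rw [e, plus_norm T'] at s1
    omega
  · have s2 := C.sum_plus_shift (fun y => P.mult y - g y) (fun y => Nat.sub_le _ _)
    have e : ∑ x ∈ P'.partsSet,
          (phiF t (fun y => P.mult y - g y) x * (x % 2) + P'.mult x * (x / 2))
        = ∑ x ∈ P'.partsSet, ((P'.mult x - T'.f x) * (x % 2) + P'.mult x * (x / 2)) := by
      refine Finset.sum_congr rfl fun x _ => ?_
      rw [hgdef, C.phiF_sub g hg, C.phiF_psiF T'.f T'.le_mult]
    rw [e, minus_norm T'] at s2
    exact s2.symm

lemma h_le_of_T (T : SYD P p q) : h ≤ p ∧ h ≤ q := by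
  have base : h ≤ ∑ x ∈ P.partsSet, P.mult x * (x / 2) := by
    calc h = ∑ x ∈ P.partsSet.filter (fun x => t < x), P.mult x := (C.sum_big_mult).symm
      _ ≤ ∑ x ∈ P.partsSet.filter (fun x => t < x), P.mult x * (x / 2) := by
          refine Finset.sum_le_sum fun x hx => ?_
          rw [Finset.mem_filter] at hx
          have := C.parts_gap hx.1
          have h2 : 1 ≤ x / 2 := by omega
          exact Nat.le_mul_of_pos_right _ (by omega)
      _ ≤ ∑ x ∈ P.partsSet, P.mult x * (x / 2) :=
          Finset.sum_le_sum_of_subset (Finset.filter_subset _ _)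
  constructor
  · calc h ≤ ∑ x ∈ P.partsSet, P.mult x * (x / 2) := base
      _ ≤ ∑ x ∈ P.partsSet, (T.f x * (x % 2) + P.mult x * (x / 2)) :=
          Finset.sum_le_sum fun x _ => Nat.le_add_left _ _
      _ = p := plus_norm T
  · calc h ≤ ∑ x ∈ P.partsSet, P.mult x * (x / 2) := base
      _ ≤ ∑ x ∈ P.partsSet, ((P.mult x - T.f x) * (x % 2) + P.mult x * (x / 2)) :=
          Finset.sum_le_sum fun x _ => Nat.le_add_left _ _
      _ = q := minus_norm T

lemma h_le_of_T' (hn : P.boxSum = p + q) (T' : SYD P' (p - h) (q - h)) :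
    h ≤ p ∧ h ≤ q := by
  obtain ⟨s1, s2⟩ := C.psi_sums T'
  set g := psiF t (P.mult (t+2)) T'.f with hgdef
  have hg : ∀ x, g x ≤ P.mult x := C.psiF_le T'.f T'.le_mult
  have tot : ∑ x ∈ P.partsSet,
      ((g x * (x % 2) + P.mult x * (x / 2))
        + ((P.mult x - g x) * (x % 2) + P.mult x * (x / 2)))
      = ((p - h) + h) + ((q - h) + h) := by
    rw [Finset.sum_add_distrib, s1, s2]
  have point : ∀ x ∈ P.partsSet,
      ((g x * (x % 2) + P.mult x * (x / 2))
        + ((P.mult x - g x) * (x % 2) + P.mult x * (x / 2))) = P.mult x * x := by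
    intro x _
    have h1 : g x + (P.mult x - g x) = P.mult x := by have := hg x; omega
    have e : x % 2 + 2 * (x / 2) = x := by omega
    calc (g x * (x % 2) + P.mult x * (x / 2))
          + ((P.mult x - g x) * (x % 2) + P.mult x * (x / 2))
        = (g x + (P.mult x - g x)) * (x % 2) + P.mult x * (2 * (x / 2)) := by ring
      _ = P.mult x * (x % 2) + P.mult x * (2 * (x / 2)) := by rw [h1]
      _ = P.mult x * (x % 2 + 2 * (x / 2)) := by ring
      _ = P.mult x * x := by rw [e]
  rw [Finset.sum_congr rfl point, sum_mult_id, hn] at tot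
  omega

/-- The section of `phi`. -/
def psi (hp : h ≤ p) (hq : h ≤ q) (T' : SYD P' (p - h) (q - h)) : SYD P p q :=
  mkSYD (psiF t (P.mult (t+2)) T'.f) (C.psiF_le T'.f T'.le_mult)
    (by have := (C.psi_sums T').1; omega)
    (by have := (C.psi_sums T').2; omega)

lemma psi_f (hp : h ≤ p) (hq : h ≤ q) (T' : SYD P' (p - h) (q - h)) :
    (C.psi hp hq T').f = psiF t (P.mult (t+2)) T'.f := rfl

lemma phi_psi (hp : h ≤ p) (hq : h ≤ q) (T' : SYD P' (p - h) (q - h)) :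
    C.phi (C.psi hp hq T') = T' := by
  refine SYD.fext (funext fun x => ?_)
  rw [phi_f, psi_f, C.phiF_psiF T'.f T'.le_mult]


end Ctx
end Stmt7Aux

namespace Stmt7Aux

lemma step2_eq {a b m1 m2 c1 d1 c2 d2 : ℕ} (ha : a + 1 ≤ m1) (hb : b + 1 ≤ m2)
    (hcd : c1 + d2 = c2 + d1) :
    ((a+1)*c1 + (m1-(a+1))*d1) + (b*c2 + (m2-b)*d2)
      = (a*c1 + (m1-a)*d1) + ((b+1)*c2 + (m2-(b+1))*d2) := by
  obtain ⟨s, rfl⟩ := Nat.exists_eq_add_of_le ha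
  obtain ⟨k, rfl⟩ := Nat.exists_eq_add_of_le hb
  have e1 : a + 1 + s - (a+1) = s := by omega
  have e2 : a + 1 + s - a = s + 1 := by omega
  have e3 : b + 1 + k - b = k + 1 := by omega
  have e4 : b + 1 + k - (b+1) = k := by omega
  rw [e1, e2, e3, e4]; nlinarith [hcd]

lemma step2_parity {a b m1 m2 c1 d1 c2 d2 : ℕ} (ha : a + 1 ≤ m1) (hb : b + 1 ≤ m2)
    (he : ((a+1)*c1 + (m1-(a+1))*d1) + (b*c2 + (m2-b)*d2)
      = (a*c1 + (m1-a)*d1) + ((b+1)*c2 + (m2-(b+1))*d2)) : c1 + d2 = c2 + d1 := by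
  obtain ⟨s, rfl⟩ := Nat.exists_eq_add_of_le ha
  obtain ⟨k, rfl⟩ := Nat.exists_eq_add_of_le hb
  have e1 : a + 1 + s - (a+1) = s := by omega
  have e2 : a + 1 + s - a = s + 1 := by omega
  have e3 : b + 1 + k - b = k + 1 := by omega
  have e4 : b + 1 + k - (b+1) = k := by omega
  rw [e1, e2, e3, e4] at he; nlinarith [he]

lemma step1_eq {a m c d : ℕ} (ha : a + 1 ≤ m) (hcd : c = d) :
    (a+1)*c + (m-(a+1))*d = a*c + (m-a)*d := by
  obtain ⟨s, rfl⟩ := Nat.exists_eq_add_of_le ha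
  have e1 : a + 1 + s - (a+1) = s := by omega
  have e2 : a + 1 + s - a = s + 1 := by omega
  rw [e1, e2, hcd]; ring

lemma step1_parity {a m c d : ℕ} (ha : a + 1 ≤ m)
    (he : (a+1)*c + (m-(a+1))*d = a*c + (m-a)*d) : c = d := by
  obtain ⟨s, rfl⟩ := Nat.exists_eq_add_of_le ha
  have e1 : a + 1 + s - (a+1) = s := by omega
  have e2 : a + 1 + s - a = s + 1 := by omega
  rw [e1, e2] at he; nlinarith [he]

lemma sum_split₂ {s : Finset ℕ} (F : ℕ → ℕ) {i j : ℕ} (hi : i ∈ s) (hj : j ∈ s)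
    (hij : i ≠ j) :
    ∑ x ∈ s, F x = F i + (F j + ∑ x ∈ (s.erase i).erase j, F x) := by
  rw [← Finset.add_sum_erase s F hi, ← Finset.add_sum_erase (s.erase i) F
    (Finset.mem_erase.2 ⟨Ne.symm hij, hj⟩)]

lemma two_point_iff {s : Finset ℕ} {F G : ℕ → ℕ} {i j : ℕ} (hi : i ∈ s) (hj : j ∈ s)
    (hij : i ≠ j) (hoth : ∀ x ∈ s, x ≠ i → x ≠ j → F x = G x) :
    (∑ x ∈ s, F x = ∑ x ∈ s, G x) ↔ F i + F j = G i + G j := by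
  rw [sum_split₂ F hi hj hij, sum_split₂ G hi hj hij]
  have e : ∑ x ∈ (s.erase i).erase j, F x = ∑ x ∈ (s.erase i).erase j, G x := by
    refine Finset.sum_congr rfl fun x hx => ?_
    rw [Finset.mem_erase, Finset.mem_erase] at hx
    exact hoth x hx.2.2 hx.2.1 hx.1
  omega

lemma one_point_iff {s : Finset ℕ} {F G : ℕ → ℕ} {j : ℕ} (hj : j ∈ s)
    (hoth : ∀ x ∈ s, x ≠ j → F x = G x) :
    (∑ x ∈ s, F x = ∑ x ∈ s, G x) ↔ F j = G j := by
  rw [← Finset.add_sum_erase s F hj, ← Finset.add_sum_erase s G hj]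
  have e : ∑ x ∈ s.erase j, F x = ∑ x ∈ s.erase j, G x := by
    refine Finset.sum_congr rfl fun x hx => ?_
    rw [Finset.mem_erase] at hx
    exact hoth x hx.2 hx.1
  omega

section Graph
variable {Q : PartitionData} {p q : ℕ}

lemma parity_pump (T U : SYD Q p q) {j : ℕ} (hj : j ∈ Q.partsSet)
    (hoth : ∀ x, x ≠ j → T.f x = U.f x) (hstep : T.f j = U.f j + 1) : j % 2 = 0 := by
  have hsum : ∑ x ∈ Q.partsSet, (T.f x * ((x+1)/2) + (Q.mult x - T.f x) * (x/2))
      = ∑ x ∈ Q.partsSet, (U.f x * ((x+1)/2) + (Q.mult x - U.f x) * (x/2)) := by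
    rw [T.plus_eq, U.plus_eq]
  rw [one_point_iff hj (fun x _ hx => by rw [hoth x hx])] at hsum
  rw [hstep] at hsum
  have := step1_parity (hstep ▸ T.le_mult j) hsum
  omega

lemma parity_transfer (T U : SYD Q p q) {i j : ℕ} (hi : i ∈ Q.partsSet) (hj : j ∈ Q.partsSet)
    (hij : i ≠ j) (hoth : ∀ x, x ≠ i → x ≠ j → T.f x = U.f x)
    (h1 : T.f i = U.f i + 1) (h2 : U.f j = T.f j + 1) : i % 2 = j % 2 := by
  have hsum : ∑ x ∈ Q.partsSet, (T.f x * ((x+1)/2) + (Q.mult x - T.f x) * (x/2))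
      = ∑ x ∈ Q.partsSet, (U.f x * ((x+1)/2) + (Q.mult x - U.f x) * (x/2)) := by
    rw [T.plus_eq, U.plus_eq]
  rw [two_point_iff hi hj hij (fun x _ hx hx' => by rw [hoth x hx hx'])] at hsum
  rw [h1, h2] at hsum
  have := step2_parity (h1 ▸ T.le_mult i) (h2 ▸ U.le_mult j) hsum
  omega

lemma transfer_mem (T : SYD Q p q) {i j : ℕ} (hi : i ∈ Q.partsSet) (hj : j ∈ Q.partsSet)
    (hij : i ≠ j) (hpar : i % 2 = j % 2) (hf1 : 1 ≤ T.f i) (hf2 : T.f j < Q.mult j) :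
    ∃ U : SYD Q p q, T.f i = U.f i + 1 ∧ U.f j = T.f j + 1
      ∧ ∀ x, x ≠ i → x ≠ j → T.f x = U.f x := by
  set g : ℕ → ℕ := fun x => if x = i then T.f i - 1 else if x = j then T.f j + 1 else T.f x
    with hgdef
  have hgi : g i = T.f i - 1 := by simp [hgdef]
  have hgj : g j = T.f j + 1 := by simp [hgdef, hij.symm]
  have hgoth : ∀ x, x ≠ i → x ≠ j → g x = T.f x := by
    intro x hx1 hx2; rw [hgdef]; simp [hx1, hx2]
  have hcd : (i+1)/2 + j/2 = (j+1)/2 + i/2 := by omega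
  have hcd' : i/2 + (j+1)/2 = j/2 + (i+1)/2 := by omega
  have hle : ∀ x, g x ≤ Q.mult x := by
    intro x
    by_cases hx1 : x = i
    · subst hx1; rw [hgi]; have := T.le_mult x; omega
    by_cases hx2 : x = j
    · subst hx2; rw [hgj]; omega
    · rw [hgoth x hx1 hx2]; exact T.le_mult x
  have key : ∀ (c1 d1 c2 d2 : ℕ), c1 + d2 = c2 + d1 →
      (g i * c1 + (Q.mult i - g i) * d1) + (g j * c2 + (Q.mult j - g j) * d2)
      = (T.f i * c1 + (Q.mult i - T.f i) * d1) + (T.f j * c2 + (Q.mult j - T.f j) * d2) := by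
    intro c1 d1 c2 d2 hc
    rw [hgi, hgj]
    obtain ⟨a, ha⟩ : ∃ a, T.f i = a + 1 := ⟨T.f i - 1, by omega⟩
    have ham : a + 1 ≤ Q.mult i := by have := T.le_mult i; omega
    rw [ha, Nat.add_sub_cancel]
    exact (step2_eq (b := T.f j) (m2 := Q.mult j) ham (by omega) hc).symm
  refine ⟨⟨g, hle, ?_, ?_⟩, show T.f i = g i + 1 by omega, show g j = T.f j + 1 from hgj,
    fun x hx1 hx2 => (hgoth x hx1 hx2).symm⟩
  · rw [← T.plus_eq]
    rw [two_point_iff hi hj hij (fun x _ hx1 hx2 => by rw [hgoth x hx1 hx2])]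
    exact key ((i+1)/2) (i/2) ((j+1)/2) (j/2) hcd
  · rw [← T.minus_eq]
    rw [two_point_iff hi hj hij (fun x _ hx1 hx2 => by rw [hgoth x hx1 hx2])]
    exact key (i/2) ((i+1)/2) (j/2) ((j+1)/2) hcd'

lemma pump_up_mem (T : SYD Q p q) {j : ℕ} (hj : j ∈ Q.partsSet) (hpar : j % 2 = 0)
    (hf : T.f j < Q.mult j) :
    ∃ U : SYD Q p q, U.f j = T.f j + 1 ∧ ∀ x, x ≠ j → T.f x = U.f x := by
  set g : ℕ → ℕ := fun x => if x = j then T.f j + 1 else T.f x with hgdef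
  have hgj : g j = T.f j + 1 := by rw [hgdef]; simp
  have hgoth : ∀ x, x ≠ j → g x = T.f x := by
    intro x hx; rw [hgdef]; simp [hx]
  have hcd : (j+1)/2 = j/2 := by omega
  have hle : ∀ x, g x ≤ Q.mult x := by
    intro x
    by_cases hx : x = j
    · subst hx; rw [hgj]; omega
    · rw [hgoth x hx]; exact T.le_mult x
  have key : ∀ (c d : ℕ), c = d →
      g j * c + (Q.mult j - g j) * d = T.f j * c + (Q.mult j - T.f j) * d := by
    intro c d hc
    rw [hgj]
    exact step1_eq (by omega) hc
  refine ⟨⟨g, hle, ?_, ?_⟩, hgj, fun x hx => (hgoth x hx).symm⟩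
  · rw [← T.plus_eq]
    rw [one_point_iff hj (fun x _ hx => by rw [hgoth x hx])]
    exact key ((j+1)/2) (j/2) hcd
  · rw [← T.minus_eq]
    rw [one_point_iff hj (fun x _ hx => by rw [hgoth x hx])]
    exact key (j/2) ((j+1)/2) hcd.symm

lemma SYD.ne_of_f {T U : SYD Q p q} {x : ℕ} (hx : T.f x ≠ U.f x) : T ≠ U :=
  fun he => hx (by rw [he])

lemma adj_of_transfer {T U : SYD Q p q} {i j : ℕ} (hcon : Consec Q i j)
    (hoth : ∀ x, x ≠ i → x ≠ j → T.f x = U.f x)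
    (hmv : (T.f i = U.f i + 1 ∧ U.f j = T.f j + 1) ∨ (U.f i = T.f i + 1 ∧ T.f j = U.f j + 1)) :
    (orbitGraph Q p q).Adj T U := by
  rw [orbitGraph, SimpleGraph.fromRel_adj]
  refine ⟨SYD.ne_of_f (x := i) (by omega), Or.inl (Or.inl ⟨i, j, hcon, hoth, hmv⟩)⟩

lemma adj_of_pump {T U : SYD Q p q} {j : ℕ} (hmin : IsMinPart Q j)
    (hoth : ∀ x, x ≠ j → T.f x = U.f x)
    (hmv : T.f j = U.f j + 1 ∨ U.f j = T.f j + 1) :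
    (orbitGraph Q p q).Adj T U := by
  rw [orbitGraph, SimpleGraph.fromRel_adj]
  refine ⟨SYD.ne_of_f (x := j) (by omega), Or.inl (Or.inr ⟨j, hmin, hoth, hmv⟩)⟩

lemma reach_transfer_aux (n : ℕ) {i j : ℕ} (hcon : Consec Q i j) (hpar : i % 2 = j % 2) :
    ∀ (T U : SYD Q p q), (T.f i - U.f i) + (U.f i - T.f i) ≤ n →
      (∀ x, x ≠ i → x ≠ j → T.f x = U.f x) → T.f i + T.f j = U.f i + U.f j →
      (orbitGraph Q p q).Reachable T U := by
  obtain ⟨hi, hj, hlt, hbet⟩ := hcon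
  have hij : i ≠ j := by omega
  induction n with
  | zero =>
    intro T U hm hoth hsum
    have hfi : T.f i = U.f i := by omega
    have hfj : T.f j = U.f j := by omega
    have : T = U := by
      refine SYD.fext (funext fun x => ?_)
      by_cases hx1 : x = i
      · subst hx1; exact hfi
      by_cases hx2 : x = j
      · subst hx2; exact hfj
      · exact hoth x hx1 hx2
    rw [this]
  | succ n ih =>
    intro T U hm hoth hsum
    rcases lt_trichotomy (T.f i) (U.f i) with hc | hc | hc
    · -- T.f i < U.f i, T.f j > U.f j : move one unit from j to i
      have hf1 : 1 ≤ T.f j := by omega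
      have hf2 : T.f i < Q.mult i := by have := U.le_mult i; omega
      obtain ⟨T₁, e1, e2, e3⟩ := transfer_mem T hj hi hij.symm hpar.symm hf1 hf2
      have hadj : (orbitGraph Q p q).Adj T T₁ :=
        adj_of_transfer ⟨hi, hj, hlt, hbet⟩ (fun x hx1 hx2 => e3 x hx2 hx1)
          (Or.inr ⟨e2, e1⟩)
      refine hadj.reachable.trans (ih T₁ U ?_ ?_ ?_)
      · omega
      · intro x hx1 hx2
        rw [← e3 x hx2 hx1]
        exact hoth x hx1 hx2
      · omega
    · -- equal
      have hfj : T.f j = U.f j := by omega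
      have : T = U := by
        refine SYD.fext (funext fun x => ?_)
        by_cases hx1 : x = i
        · subst hx1; omega
        by_cases hx2 : x = j
        · subst hx2; exact hfj
        · exact hoth x hx1 hx2
      rw [this]
    · -- T.f i > U.f i : move one unit from i to j
      have hf1 : 1 ≤ T.f i := by omega
      have hf2 : T.f j < Q.mult j := by have := U.le_mult j; omega
      obtain ⟨T₁, e1, e2, e3⟩ := transfer_mem T hi hj hij hpar hf1 hf2
      have hadj : (orbitGraph Q p q).Adj T T₁ :=
        adj_of_transfer ⟨hi, hj, hlt, hbet⟩ (fun x hx1 hx2 => e3 x hx1 hx2)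
          (Or.inl ⟨e1, e2⟩)
      refine hadj.reachable.trans (ih T₁ U ?_ ?_ ?_)
      · omega
      · intro x hx1 hx2
        rw [← e3 x hx1 hx2]
        exact hoth x hx1 hx2
      · omega

lemma reach_transfer {i j : ℕ} (hcon : Consec Q i j) (hpar : i % 2 = j % 2)
    (T U : SYD Q p q) (hoth : ∀ x, x ≠ i → x ≠ j → T.f x = U.f x)
    (hsum : T.f i + T.f j = U.f i + U.f j) : (orbitGraph Q p q).Reachable T U :=
  reach_transfer_aux ((T.f i - U.f i) + (U.f i - T.f i)) hcon hpar T U le_rfl hoth hsum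

lemma reach_pump_aux (n : ℕ) {j : ℕ} (hmin : IsMinPart Q j) (hpar : j % 2 = 0) :
    ∀ (T U : SYD Q p q), (T.f j - U.f j) + (U.f j - T.f j) ≤ n →
      (∀ x, x ≠ j → T.f x = U.f x) → (orbitGraph Q p q).Reachable T U := by
  induction n with
  | zero =>
    intro T U hm hoth
    have : T = U := by
      refine SYD.fext (funext fun x => ?_)
      by_cases hx : x = j
      · subst hx; omega
      · exact hoth x hx
    rw [this]
  | succ n ih =>
    intro T U hm hoth
    rcases lt_trichotomy (T.f j) (U.f j) with hc | hc | hc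
    · have hf : T.f j < Q.mult j := by have := U.le_mult j; omega
      obtain ⟨T₁, e1, e2⟩ := pump_up_mem T hmin.1 hpar hf
      have hadj : (orbitGraph Q p q).Adj T T₁ :=
        adj_of_pump hmin e2 (Or.inr e1)
      refine hadj.reachable.trans (ih T₁ U ?_ ?_)
      · omega
      · intro x hx
        rw [← e2 x hx]
        exact hoth x hx
    · have : T = U := by
        refine SYD.fext (funext fun x => ?_)
        by_cases hx : x = j
        · subst hx; omega
        · exact hoth x hx
      rw [this]
    · have hf : U.f j < Q.mult j := by have := T.le_mult j; omega
      obtain ⟨U₁, e1, e2⟩ := pump_up_mem U hmin.1 hpar hf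
      have hadj : (orbitGraph Q p q).Adj U₁ U :=
        adj_of_pump hmin (fun x hx => (e2 x hx).symm) (Or.inl e1)
      refine (ih T U₁ ?_ ?_).trans hadj.reachable
      · omega
      · intro x hx
        rw [hoth x hx]
        exact e2 x hx
    
end Graph
end Stmt7Aux

namespace Stmt7Aux

section Coord
variable {t m2 : ℕ} {g g' : ℕ → ℕ}

lemma phiF_zero : phiF t g 0 = 0 := by rw [phiF, if_pos rfl]

lemma phiF_lt {x : ℕ} (hx1 : 1 ≤ x) (hx : x < t) : phiF t g x = g x := by
  rw [phiF, if_neg (by omega), if_neg (by omega), if_pos (by omega), zero_add]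

lemma phiF_t (ht1 : 1 ≤ t) : phiF t g t = g (t+2) + g t := by
  rw [phiF, if_neg (by omega), if_pos le_rfl, if_pos le_rfl]

lemma phiF_gt {x : ℕ} (hx1 : 1 ≤ x) (hx : t < x) : phiF t g x = g (x+2) := by
  rw [phiF, if_neg (by omega), if_pos (by omega), if_neg (by omega), add_zero]

lemma psiF_lt {x : ℕ} (hx : x < t) : psiF t m2 g' x = g' x := by
  rw [psiF, if_pos hx]

lemma psiF_t : psiF t m2 g' t = g' t - min (g' t) m2 := by
  rw [psiF, if_neg (by omega), if_pos rfl]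

lemma psiF_t2 : psiF t m2 g' (t+2) = min (g' t) m2 := by
  rw [psiF, if_neg (by omega), if_neg (by omega), if_pos rfl]

lemma psiF_t1 : psiF t m2 g' (t+1) = 0 := by
  rw [psiF, if_neg (by omega), if_neg (by omega), if_neg (by omega), if_pos (by omega)]

lemma psiF_gt {x : ℕ} (hx : t + 2 < x) : psiF t m2 g' x = g' (x - 2) := by
  rw [psiF, if_neg (by omega), if_neg (by omega), if_neg (by omega), if_neg (by omega)]

end Coord

set_option linter.unusedSectionVars false

namespace Ctx
variable {P P' : PartitionData} {h t : ℕ} (C : Ctx P P' h t) {p q : ℕ}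
include C

lemma f_zero {T : SYD P p q} : T.f 0 = 0 := by
  have := T.le_mult 0; rw [mult_zero] at this; omega

lemma f_eq_zero {T : SYD P p q} {x : ℕ} (hx : x ∉ P.partsSet) : T.f x = 0 := by
  have := T.le_mult x; rw [mult_eq_zero hx] at this; omega

lemma not_mem_t1 : t + 1 ∉ P.partsSet := by
  intro hmem
  rcases C.parts_gap hmem with hc | hc <;> omega

/-- Fiber connectivity: diagrams with the same image under `phiF` are connected. -/
lemma reach_fiber (T U : SYD P p q) (heq : ∀ x, phiF t T.f x = phiF t U.f x) :
    (orbitGraph P p q).Reachable T U := by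
  have hoth : ∀ x, x ≠ t → x ≠ t + 2 → T.f x = U.f x := by
    intro x hx1 hx2
    rcases Nat.eq_zero_or_pos x with rfl | hx
    · rw [C.f_zero, C.f_zero]
    rcases lt_trichotomy x t with hc | hc | hc
    · have := heq x
      rwa [phiF_lt hx hc, phiF_lt hx hc] at this
    · omega
    · rcases Nat.lt_or_ge (t + 2) x with hc2 | hc2
      · have := heq (x - 2)
        rw [phiF_gt (by omega) (by omega), phiF_gt (by omega) (by omega)] at this
        have e : x - 2 + 2 = x := by omega
        rwa [e] at this
      · have hx1' : x = t + 1 := by omega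
        rw [hx1', C.f_eq_zero C.not_mem_t1, C.f_eq_zero C.not_mem_t1]
  rcases Nat.eq_zero_or_pos t with rfl | ht1
  · -- t = 0 : only the coordinate 2 can differ
    by_cases h2 : (2 : ℕ) ∈ P.partsSet
    · have hmin : IsMinPart P 2 := by
        refine ⟨h2, fun x hx => ?_⟩
        have h1x := one_le_of_mem_parts hx
        rcases C.parts_gap hx with hc | hc <;> omega
      refine reach_pump_aux ((T.f 2 - U.f 2) + (U.f 2 - T.f 2)) hmin rfl T U le_rfl ?_
      intro x hx
      rcases Nat.eq_zero_or_pos x with rfl | hx0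
      · rw [C.f_zero, C.f_zero]
      · exact hoth x (by omega) (by omega)
    · have : T = U := by
        refine SYD.fext (funext fun x => ?_)
        rcases Nat.eq_zero_or_pos x with rfl | hx0
        · rw [C.f_zero, C.f_zero]
        by_cases hx2 : x = 2
        · subst hx2
          rw [C.f_eq_zero h2, C.f_eq_zero h2]
        · exact hoth x (by omega) (by omega)
      rw [this]
  · -- t ≥ 1
    have hsum : T.f (t+2) + T.f t = U.f (t+2) + U.f t := by
      have := heq t
      rwa [phiF_t ht1, phiF_t ht1] at this
    by_cases h2 : (t + 2 : ℕ) ∈ P.partsSet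
    · have hcon : Consec P (t+2) t := by
        refine ⟨h2, C.t_mem ht1, by omega, fun x hx hbet => ?_⟩
        rcases C.parts_gap hx with hc | hc <;> omega
      refine reach_transfer hcon (by omega) T U ?_ (by omega)
      intro x hx1 hx2
      exact hoth x hx2 hx1
    · have : T = U := by
        refine SYD.fext (funext fun x => ?_)
        by_cases hx2 : x = t + 2
        · subst hx2
          rw [C.f_eq_zero h2, C.f_eq_zero h2]
        by_cases hxt : x = t
        · rw [hxt]
          have e1 : T.f (t+2) = 0 := C.f_eq_zero h2
          have e2 : U.f (t+2) = 0 := C.f_eq_zero h2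
          omega
        · exact hoth x hxt hx2
      rw [this]

end Ctx
end Stmt7Aux

namespace Stmt7Aux
namespace Ctx
variable {P P' : PartitionData} {h t : ℕ} (C : Ctx P P' h t) {p q : ℕ}
include C

lemma reach_phi_pump (T U : SYD P p q) {j : ℕ} (hmin : IsMinPart P j)
    (hoth : ∀ x, x ≠ j → T.f x = U.f x) (hstep : T.f j = U.f j + 1) :
    (orbitGraph P' (p-h) (q-h)).Reachable (C.phi T) (C.phi U) := by
  have hpar : j % 2 = 0 := parity_pump T U hmin.1 hoth hstep
  have hj1 : 1 ≤ j := one_le_of_mem_parts hmin.1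
  rcases C.parts_gap hmin.1 with hjt | hjt
  · -- j ≤ t (so t ≥ 1)
    have ht1 : 1 ≤ t := by omega
    have hmin' : IsMinPart P' j := by
      refine ⟨(C.mem_parts' hj1).2 (Or.inr ⟨hjt, hmin.1⟩), fun x hx => ?_⟩
      have hx1 := one_le_of_mem_parts hx
      rcases (C.mem_parts' hx1).1 hx with ⟨hc1, _⟩ | ⟨_, hc2⟩
      · omega
      · exact hmin.2 x hc2
    have hoth' : ∀ x, x ≠ j → (C.phi T).f x = (C.phi U).f x := by
      intro x hx
      rw [phi_f, phi_f]
      rcases Nat.eq_zero_or_pos x with rfl | hx0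
      · rw [phiF_zero, phiF_zero]
      rcases lt_trichotomy x t with hc | hc | hc
      · rw [phiF_lt hx0 hc, phiF_lt hx0 hc, hoth x hx]
      · rw [hc, phiF_t ht1, phiF_t ht1, hoth (t+2) (by omega), hoth t (by omega)]
      · rw [phiF_gt hx0 hc, phiF_gt hx0 hc, hoth (x+2) (by omega)]
    have hstep' : (C.phi T).f j = (C.phi U).f j + 1 := by
      rw [phi_f, phi_f]
      rcases eq_or_lt_of_le hjt with he | hlt
      · have hj' := hstep
        rw [he] at hj' ⊢
        rw [phiF_t ht1, phiF_t ht1, hoth (t+2) (by omega)]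
        omega
      · rw [phiF_lt hj1 hlt, phiF_lt hj1 hlt]
        exact hstep
    exact (adj_of_pump hmin' hoth' (Or.inl hstep')).reachable
  · -- j ≥ t + 2, so t = 0 by minimality
    have ht0 : t = 0 := by
      by_contra ht
      have := hmin.2 t (C.t_mem (by omega))
      omega
    subst ht0
    by_cases hj2 : j = 2
    · have : C.phi T = C.phi U := by
        refine SYD.fext (funext fun x => ?_)
        rw [phi_f, phi_f]
        rcases Nat.eq_zero_or_pos x with rfl | hx0
        · rw [phiF_zero, phiF_zero]
        · rw [phiF_gt hx0 (by omega), phiF_gt hx0 (by omega), hoth (x+2) (by omega)]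
      rw [this]
    · have hj3 : 3 ≤ j := by omega
      have e : j - 2 + 2 = j := by omega
      have hmem' : j - 2 ∈ P'.partsSet := by
        refine (C.mem_parts' (by omega)).2 (Or.inl ⟨by omega, ?_⟩)
        rw [e]; exact hmin.1
      have hmin' : IsMinPart P' (j-2) := by
        refine ⟨hmem', fun x hx => ?_⟩
        have hx1 := one_le_of_mem_parts hx
        rcases (C.mem_parts' hx1).1 hx with ⟨_, hc2⟩ | ⟨hc1, _⟩
        · have := hmin.2 (x+2) hc2; omega
        · omega
      have hoth' : ∀ x, x ≠ j - 2 → (C.phi T).f x = (C.phi U).f x := by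
        intro x hx
        rw [phi_f, phi_f]
        rcases Nat.eq_zero_or_pos x with rfl | hx0
        · rw [phiF_zero, phiF_zero]
        · rw [phiF_gt hx0 (by omega), phiF_gt hx0 (by omega), hoth (x+2) (by omega)]
      have hstep' : (C.phi T).f (j-2) = (C.phi U).f (j-2) + 1 := by
        rw [phi_f, phi_f, phiF_gt (by omega) (by omega), phiF_gt (by omega) (by omega), e]
        exact hstep
      exact (adj_of_pump hmin' hoth' (Or.inl hstep')).reachable

lemma reach_phi_transfer (T U : SYD P p q) {i j : ℕ} (hcon : Consec P i j)
    (hoth : ∀ x, x ≠ i → x ≠ j → T.f x = U.f x)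
    (h1 : T.f i = U.f i + 1) (h2 : U.f j = T.f j + 1) :
    (orbitGraph P' (p-h) (q-h)).Reachable (C.phi T) (C.phi U) := by
  obtain ⟨hi, hj, hji, hbet⟩ := hcon
  have hpar : i % 2 = j % 2 := parity_transfer T U hi hj (by omega) hoth h1 h2
  have hi1 : 1 ≤ i := one_le_of_mem_parts hi
  have hj1 : 1 ≤ j := one_le_of_mem_parts hj
  rcases C.parts_gap hj with hjt | hjt
  · -- j ≤ t, so t ≥ 1
    have ht1 : 1 ≤ t := by omega
    rcases C.parts_gap hi with hit | hit
    · -- both small : direct edge at (i, j) in P'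
      have hcon' : Consec P' i j := by
        refine ⟨(C.mem_parts' hi1).2 (Or.inr ⟨hit, hi⟩),
          (C.mem_parts' hj1).2 (Or.inr ⟨hjt, hj⟩), hji, fun x hx hb => ?_⟩
        have hx1 := one_le_of_mem_parts hx
        rcases (C.mem_parts' hx1).1 hx with ⟨hc1, _⟩ | ⟨_, hc2⟩
        · omega
        · exact hbet x hc2 hb
      have hoth' : ∀ x, x ≠ i → x ≠ j → (C.phi T).f x = (C.phi U).f x := by
        intro x hxi hxj
        rw [phi_f, phi_f]
        rcases Nat.eq_zero_or_pos x with rfl | hx0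
        · rw [phiF_zero, phiF_zero]
        rcases lt_trichotomy x t with hc | hc | hc
        · rw [phiF_lt hx0 hc, phiF_lt hx0 hc, hoth x hxi hxj]
        · rw [hc, phiF_t ht1, phiF_t ht1, hoth (t+2) (by omega) (by omega),
            hoth t (by omega) (by omega)]
        · rw [phiF_gt hx0 hc, phiF_gt hx0 hc, hoth (x+2) (by omega) (by omega)]
      have hstep_i : (C.phi T).f i = (C.phi U).f i + 1 := by
        rw [phi_f, phi_f]
        rcases eq_or_lt_of_le hit with he | hlt
        · have h1' := h1
          rw [he] at h1' ⊢
          rw [phiF_t ht1, phiF_t ht1, hoth (t+2) (by omega) (by omega)]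
          omega
        · rw [phiF_lt hi1 hlt, phiF_lt hi1 hlt]
          exact h1
      have hstep_j : (C.phi U).f j = (C.phi T).f j + 1 := by
        rw [phi_f, phi_f, phiF_lt hj1 (by omega), phiF_lt hj1 (by omega)]
        exact h2
      exact (adj_of_transfer hcon' hoth' (Or.inl ⟨hstep_i, hstep_j⟩)).reachable
    · -- i big, j small : j = t
      have hjeq : j = t := by
        have := hbet t (C.t_mem ht1)
        omega
      rw [hjeq] at h2 hji hoth
      by_cases hi2 : i = t + 2
      · -- phi T = phi U
        rw [hi2] at h1 hoth
        have : C.phi T = C.phi U := by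
          refine SYD.fext (funext fun x => ?_)
          rw [phi_f, phi_f]
          rcases Nat.eq_zero_or_pos x with rfl | hx0
          · rw [phiF_zero, phiF_zero]
          rcases lt_trichotomy x t with hc | hc | hc
          · rw [phiF_lt hx0 hc, phiF_lt hx0 hc, hoth x (by omega) (by omega)]
          · rw [hc, phiF_t ht1, phiF_t ht1]
            omega
          · rw [phiF_gt hx0 hc, phiF_gt hx0 hc, hoth (x+2) (by omega) (by omega)]
        rw [this]
      · -- i > t + 2, and t+2 is not a part
        have hi3 : t + 3 ≤ i := by omega
        have hnt2 : t + 2 ∉ P.partsSet := fun hmem => hbet (t+2) hmem ⟨by omega, by omega⟩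
        have e : i - 2 + 2 = i := by omega
        have hcon' : Consec P' (i-2) t := by
          refine ⟨(C.mem_parts' (by omega)).2 (Or.inl ⟨by omega, by rw [e]; exact hi⟩),
            (C.mem_parts' ht1).2 (Or.inr ⟨le_rfl, C.t_mem ht1⟩), by omega, fun x hx hb => ?_⟩
          have hx1 := one_le_of_mem_parts hx
          rcases (C.mem_parts' hx1).1 hx with ⟨_, hc2⟩ | ⟨hc1, _⟩
          · exact hbet (x+2) hc2 ⟨by omega, by omega⟩
          · omega
        have hoth' : ∀ x, x ≠ i - 2 → x ≠ t → (C.phi T).f x = (C.phi U).f x := by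
          intro x hxi hxt
          rw [phi_f, phi_f]
          rcases Nat.eq_zero_or_pos x with rfl | hx0
          · rw [phiF_zero, phiF_zero]
          rcases lt_trichotomy x t with hc | hc | hc
          · rw [phiF_lt hx0 hc, phiF_lt hx0 hc, hoth x (by omega) (by omega)]
          · omega
          · rw [phiF_gt hx0 hc, phiF_gt hx0 hc, hoth (x+2) (by omega) (by omega)]
        have hstep_i : (C.phi T).f (i-2) = (C.phi U).f (i-2) + 1 := by
          rw [phi_f, phi_f, phiF_gt (by omega) (by omega), phiF_gt (by omega) (by omega), e]
          exact h1
        have hstep_t : (C.phi U).f t = (C.phi T).f t + 1 := by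
          rw [phi_f, phi_f, phiF_t ht1, phiF_t ht1,
            C.f_eq_zero hnt2, C.f_eq_zero hnt2]
          omega
        exact (adj_of_transfer hcon' hoth' (Or.inl ⟨hstep_i, hstep_t⟩)).reachable
  · -- j ≥ t + 2 : both big
    by_cases hj2 : j = 2
    · -- then t = 0 and the move becomes a pump at the minimal part i - 2 of P'
      have ht0 : t = 0 := by omega
      subst ht0
      rw [hj2] at h2 hji hoth hbet
      have hi3 : 3 ≤ i := by omega
      have e : i - 2 + 2 = i := by omega
      have hmem' : i - 2 ∈ P'.partsSet := by
        refine (C.mem_parts' (by omega)).2 (Or.inl ⟨by omega, by rw [e]; exact hi⟩)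
      have hmin' : IsMinPart P' (i-2) := by
        refine ⟨hmem', fun x hx => ?_⟩
        have hx1 := one_le_of_mem_parts hx
        rcases (C.mem_parts' hx1).1 hx with ⟨_, hc2⟩ | ⟨hc1, _⟩
        · have := hbet (x+2) hc2
          omega
        · omega
      have hoth' : ∀ x, x ≠ i - 2 → (C.phi T).f x = (C.phi U).f x := by
        intro x hx
        rw [phi_f, phi_f]
        rcases Nat.eq_zero_or_pos x with rfl | hx0
        · rw [phiF_zero, phiF_zero]
        · rw [phiF_gt hx0 (by omega), phiF_gt hx0 (by omega), hoth (x+2) (by omega) (by omega)]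
      have hstep' : (C.phi T).f (i-2) = (C.phi U).f (i-2) + 1 := by
        rw [phi_f, phi_f, phiF_gt (by omega) (by omega), phiF_gt (by omega) (by omega), e]
        exact h1
      exact (adj_of_pump hmin' hoth' (Or.inl hstep')).reachable
    · -- j ≥ 3 : transfer at (i-2, j-2) in P'
      have hj3 : 3 ≤ j := by omega
      have ei : i - 2 + 2 = i := by omega
      have ej : j - 2 + 2 = j := by omega
      have hcon' : Consec P' (i-2) (j-2) := by
        refine ⟨(C.mem_parts' (by omega)).2 (Or.inl ⟨by omega, by rw [ei]; exact hi⟩),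
          (C.mem_parts' (by omega)).2 (Or.inl ⟨by omega, by rw [ej]; exact hj⟩),
          by omega, fun x hx hb => ?_⟩
        have hx1 := one_le_of_mem_parts hx
        rcases (C.mem_parts' hx1).1 hx with ⟨_, hc2⟩ | ⟨hc1, _⟩
        · exact hbet (x+2) hc2 ⟨by omega, by omega⟩
        · omega
      have hoth' : ∀ x, x ≠ i - 2 → x ≠ j - 2 → (C.phi T).f x = (C.phi U).f x := by
        intro x hxi hxj
        rw [phi_f, phi_f]
        rcases Nat.eq_zero_or_pos x with rfl | hx0
        · rw [phiF_zero, phiF_zero]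
        rcases lt_trichotomy x t with hc | hc | hc
        · rw [phiF_lt hx0 hc, phiF_lt hx0 hc, hoth x (by omega) (by omega)]
        · rw [hc, phiF_t (by omega), phiF_t (by omega), hoth (t+2) (by omega) (by omega),
            hoth t (by omega) (by omega)]
        · rw [phiF_gt hx0 hc, phiF_gt hx0 hc, hoth (x+2) (by omega) (by omega)]
      have hstep_i : (C.phi T).f (i-2) = (C.phi U).f (i-2) + 1 := by
        rw [phi_f, phi_f, phiF_gt (by omega) (by omega), phiF_gt (by omega) (by omega), ei]
        exact h1
      have hstep_j : (C.phi U).f (j-2) = (C.phi T).f (j-2) + 1 := by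
        rw [phi_f, phi_f]
        rcases eq_or_lt_of_le (show t ≤ j - 2 by omega) with he | hlt
        · rw [← he]
          have e2 : t + 2 = j := by omega
          rw [phiF_t (by omega), phiF_t (by omega), e2, hoth t (by omega) (by omega)]
          omega
        · rw [phiF_gt (by omega) hlt, phiF_gt (by omega) hlt, ej]
          exact h2
      exact (adj_of_transfer hcon' hoth' (Or.inl ⟨hstep_i, hstep_j⟩)).reachable

lemma reach_phi_rel {T U : SYD P p q} (hrel : AdjRel P 1 T U) :
    (orbitGraph P' (p-h) (q-h)).Reachable (C.phi T) (C.phi U) := by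
  rcases hrel with ⟨i, j, hcon, hoth, hmv | hmv⟩ | ⟨j, hmin, hoth, hmv | hmv⟩
  · exact C.reach_phi_transfer T U hcon hoth hmv.1 hmv.2
  · exact (C.reach_phi_transfer U T hcon (fun x a b => (hoth x a b).symm) hmv.1 hmv.2).symm
  · exact C.reach_phi_pump T U hmin hoth hmv
  · exact (C.reach_phi_pump U T hmin (fun x a => (hoth x a).symm) hmv).symm

lemma reach_phi {T U : SYD P p q} (hadj : (orbitGraph P p q).Adj T U) :
    (orbitGraph P' (p-h) (q-h)).Reachable (C.phi T) (C.phi U) := by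
  rw [orbitGraph, SimpleGraph.fromRel_adj] at hadj
  rcases hadj with ⟨_, hrel | hrel⟩
  · exact C.reach_phi_rel hrel
  · exact (C.reach_phi_rel hrel).symm

end Ctx
end Stmt7Aux

namespace Stmt7Aux

lemma f_zero' {Q : PartitionData} {p q : ℕ} (T : SYD Q p q) : T.f 0 = 0 := by
  have := T.le_mult 0; rw [mult_zero] at this; omega

lemma psiF_ext_at {t m2 : ℕ} (g1 g2 : ℕ → ℕ) (x : ℕ)
    (hlow : x < t → g1 x = g2 x) (ht' : g1 t = g2 t)
    (hhigh : t + 2 < x → g1 (x-2) = g2 (x-2)) :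
    psiF t m2 g1 x = psiF t m2 g2 x := by
  rw [psiF, psiF]
  split_ifs with c1 c2 c3 c4
  · exact hlow c1
  · rw [ht']
  · rw [ht']
  · rfl
  · exact hhigh (by omega)

namespace Ctx
variable {P P' : PartitionData} {h t : ℕ} (C : Ctx P P' h t) {p q : ℕ}
include C

lemma t_mem_parts' (ht1 : 1 ≤ t) : t ∈ P'.partsSet :=
  (C.mem_parts' ht1).2 (Or.inr ⟨le_rfl, C.t_mem ht1⟩)

lemma big_lift {x : ℕ} (hx : x ∈ P'.partsSet) (hxt : t < x) : x + 2 ∈ P.partsSet := by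
  rcases (C.mem_parts' (one_le_of_mem_parts hx)).1 hx with ⟨_, hm⟩ | ⟨hc, _⟩
  · exact hm
  · omega

lemma mult'_big {x : ℕ} (hx1 : 1 ≤ x) (hxt : t < x) : P'.mult x = P.mult (x+2) := by
  rw [C.mult'_eq hx1, if_pos (by omega), if_neg (by omega), add_zero]

lemma mult'_t (ht1 : 1 ≤ t) : P'.mult t = P.mult (t+2) + P.mult t := by
  rw [C.mult'_eq ht1, if_pos le_rfl, if_pos le_rfl]

lemma reach_psi_fiber (hp : h ≤ p) (hq : h ≤ q) (T' : SYD P' (p-h) (q-h)) (W : SYD P p q)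
    (hW : ∀ x, phiF t W.f x = T'.f x) :
    (orbitGraph P p q).Reachable (C.psi hp hq T') W := by
  refine C.reach_fiber _ _ (fun x => ?_)
  rw [psi_f, C.phiF_psiF T'.f T'.le_mult, ← hW x]

lemma reach_psi_pump (hp : h ≤ p) (hq : h ≤ q) (T' U' : SYD P' (p-h) (q-h)) {j : ℕ}
    (hmin : IsMinPart P' j) (hoth : ∀ x, x ≠ j → T'.f x = U'.f x)
    (hstep : T'.f j = U'.f j + 1) :
    (orbitGraph P p q).Reachable (C.psi hp hq T') (C.psi hp hq U') := by
  have hpar : j % 2 = 0 := parity_pump T' U' hmin.1 hoth hstep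
  have hj1 : 1 ≤ j := one_le_of_mem_parts hmin.1
  rcases lt_trichotomy j t with hjt | hjt | hjt
  · -- j < t : direct pump at j in P
    have hjP : j ∈ P.partsSet := by
      rcases (C.mem_parts' hj1).1 hmin.1 with ⟨hc, _⟩ | ⟨_, hm⟩
      · omega
      · exact hm
    have hminP : IsMinPart P j := by
      refine ⟨hjP, fun x hx => ?_⟩
      rcases C.parts_gap hx with hc | hc
      · exact hmin.2 x ((C.mem_parts' (one_le_of_mem_parts hx)).2 (Or.inr ⟨hc, hx⟩))
      · omega
    have hothP : ∀ x, x ≠ j → (C.psi hp hq T').f x = (C.psi hp hq U').f x := by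
      intro x hx
      rw [psi_f, psi_f]
      exact psiF_ext_at _ _ x (fun hc => hoth x hx) (hoth t (by omega))
        (fun hc => hoth (x-2) (by omega))
    have hstepP : (C.psi hp hq T').f j = (C.psi hp hq U').f j + 1 := by
      rw [psi_f, psi_f, psiF_lt hjt, psiF_lt hjt]
      exact hstep
    exact (adj_of_pump hminP hothP (Or.inl hstepP)).reachable
  · -- j = t
    have ht1 : 1 ≤ t := by omega
    rw [hjt] at hoth hstep
    have hminP : IsMinPart P t := by
      refine ⟨C.t_mem ht1, fun x hx => ?_⟩
      rcases C.parts_gap hx with hc | hc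
      · have := hmin.2 x ((C.mem_parts' (one_le_of_mem_parts hx)).2 (Or.inr ⟨hc, hx⟩))
        omega
      · omega
    set m2 := P.mult (t+2) with hm2def
    set V := C.psi hp hq U' with hVdef
    have hVt : V.f t = U'.f t - min (U'.f t) m2 := by rw [hVdef, psi_f, psiF_t]
    have hVt2 : V.f (t+2) = min (U'.f t) m2 := by rw [hVdef, psi_f, psiF_t2]
    have hbound : T'.f t ≤ m2 + P.mult t := by
      have := T'.le_mult t
      rw [C.mult'_t ht1] at this
      omega
    have hVlt : V.f t < P.mult t := by
      have hmt : 0 < P.mult t := mult_pos_iff.2 (C.t_mem ht1)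
      have := Nat.min_le_left (U'.f t) m2
      have := Nat.min_le_right (U'.f t) m2
      rcases Nat.le_total (U'.f t) m2 with hc | hc
      · rw [Nat.min_eq_left hc] at hVt; omega
      · rw [Nat.min_eq_right hc] at hVt; omega
    obtain ⟨W, eW1, eW2⟩ := pump_up_mem V (C.t_mem ht1) (by omega) hVlt
    have hfib : ∀ x, phiF t W.f x = T'.f x := by
      intro x
      rcases Nat.eq_zero_or_pos x with rfl | hx0
      · rw [phiF_zero, f_zero' T']
      rcases lt_trichotomy x t with hc | hc | hc
      · rw [phiF_lt hx0 hc, ← eW2 x (by omega), hVdef, psi_f, psiF_lt hc, hoth x (by omega)]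
      · rw [hc, phiF_t ht1, ← eW2 (t+2) (by omega), eW1, hVt2, hVt]
        have := Nat.min_le_left (U'.f t) m2
        omega
      · rw [phiF_gt hx0 hc, ← eW2 (x+2) (by omega), hVdef, psi_f, psiF_gt (by omega)]
        have e : x + 2 - 2 = x := by omega
        rw [e, hoth x (by omega)]
    have hadj : (orbitGraph P p q).Adj W V :=
      adj_of_pump hminP (fun x hx => (eW2 x hx).symm) (Or.inl eW1)
    exact (C.reach_psi_fiber hp hq T' W hfib).trans hadj.reachable
  · -- j > t : t = 0
    have ht0 : t = 0 := by
      by_contra ht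
      have := hmin.2 t (C.t_mem_parts' (by omega))
      omega
    subst ht0
    have hjP : j + 2 ∈ P.partsSet := by
      rcases (C.mem_parts' hj1).1 hmin.1 with ⟨_, hm⟩ | ⟨hc, _⟩
      · exact hm
      · omega
    set m2 := P.mult 2 with hm2def
    have hpsiT2 : (C.psi hp hq T').f 2 = 0 := by
      rw [psi_f]
      simp [psiF, f_zero' T']
    have hpsiTj : (C.psi hp hq T').f (j+2) = T'.f j := by
      rw [psi_f, psiF_gt (by omega)]
      have e : j + 2 - 2 = j := by omega
      rw [e]
    have hpsiUj : (C.psi hp hq U').f (j+2) = U'.f j := by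
      rw [psi_f, psiF_gt (by omega)]
      have e : j + 2 - 2 = j := by omega
      rw [e]
    by_cases h2p : (2 : ℕ) ∈ P.partsSet
    · -- transfer from j+2 to 2
      have hconP : Consec P (j+2) 2 := by
        refine ⟨hjP, h2p, by omega, fun x hx hb => ?_⟩
        have hx3 : 3 ≤ x := by omega
        have e : x - 2 + 2 = x := by omega
        have := hmin.2 (x-2) ((C.mem_parts' (by omega)).2 (Or.inl ⟨by omega, by rw [e]; exact hx⟩))
        omega
      obtain ⟨W, e1, e2, e3⟩ := transfer_mem (C.psi hp hq T') hjP h2p (by omega) (by omega)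
        (by rw [hpsiTj]; omega) (by rw [hpsiT2]; exact mult_pos_iff.2 h2p)
      have hfib : ∀ x, phiF 0 W.f x = U'.f x := by
        intro x
        rcases Nat.eq_zero_or_pos x with rfl | hx0
        · rw [phiF_zero, f_zero' U']
        rw [phiF_gt hx0 (by omega)]
        by_cases hxj : x = j
        · rw [hxj]
          rw [hpsiTj] at e1
          rw [hstep] at e1
          omega
        · rw [← e3 (x+2) (by omega) (by omega), psi_f, psiF_gt (by omega)]
          have e : x + 2 - 2 = x := by omega
          rw [e, hoth x hxj]
      have hadj : (orbitGraph P p q).Adj (C.psi hp hq T') W :=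
        adj_of_transfer hconP e3 (Or.inl ⟨e1, e2⟩)
      exact hadj.reachable.trans (C.reach_psi_fiber hp hq U' W hfib).symm
    · -- 2 not a part : pump at the minimal part j+2 of P
      have hminP : IsMinPart P (j+2) := by
        refine ⟨hjP, fun x hx => ?_⟩
        rcases C.parts_gap hx with hc | hc
        · have := one_le_of_mem_parts hx; omega
        · have hx2 : x ≠ 2 := fun he => h2p (he ▸ hx)
          have hx3 : 3 ≤ x := by omega
          have e : x - 2 + 2 = x := by omega
          have := hmin.2 (x-2)
            ((C.mem_parts' (by omega)).2 (Or.inl ⟨by omega, by rw [e]; exact hx⟩))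
          omega
      have hothP : ∀ x, x ≠ j + 2 → (C.psi hp hq T').f x = (C.psi hp hq U').f x := by
        intro x hx
        rw [psi_f, psi_f]
        refine psiF_ext_at _ _ x (by omega) (by rw [f_zero' T', f_zero' U']) ?_
        intro hc
        exact hoth (x-2) (by omega)
      have hstepP : (C.psi hp hq T').f (j+2) = (C.psi hp hq U').f (j+2) + 1 := by
        rw [hpsiTj, hpsiUj]
        exact hstep
      exact (adj_of_pump hminP hothP (Or.inl hstepP)).reachable


lemma reach_psi_transfer (hp : h ≤ p) (hq : h ≤ q) (T' U' : SYD P' (p-h) (q-h)) {i j : ℕ}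
    (hcon : Consec P' i j) (hoth : ∀ x, x ≠ i → x ≠ j → T'.f x = U'.f x)
    (h1 : T'.f i = U'.f i + 1) (h2 : U'.f j = T'.f j + 1) :
    (orbitGraph P p q).Reachable (C.psi hp hq T') (C.psi hp hq U') := by
  obtain ⟨hi, hj, hji, hbet⟩ := hcon
  have hpar : i % 2 = j % 2 := parity_transfer T' U' hi hj (by omega) hoth h1 h2
  have hi1 : 1 ≤ i := one_le_of_mem_parts hi
  have hj1 : 1 ≤ j := one_le_of_mem_parts hj
  set m2 := P.mult (t+2) with hm2def
  rcases le_or_gt i t with hit | hit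
  · -- i ≤ t, so j < t and t ≥ 1
    have ht1 : 1 ≤ t := by omega
    have hjlt : j < t := by omega
    have hjP : j ∈ P.partsSet := by
      rcases (C.mem_parts' hj1).1 hj with ⟨hc, _⟩ | ⟨_, hm⟩
      · omega
      · exact hm
    have hiP : i ∈ P.partsSet := by
      rcases (C.mem_parts' hi1).1 hi with ⟨hc, hm⟩ | ⟨_, hm⟩
      · have he : i = t := by omega
        rw [he]; exact C.t_mem ht1
      · exact hm
    have hconP : Consec P i j := by
      refine ⟨hiP, hjP, hji, fun x hx hb => ?_⟩
      rcases C.parts_gap hx with hc | hc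
      · exact hbet x ((C.mem_parts' (one_le_of_mem_parts hx)).2 (Or.inr ⟨hc, hx⟩)) hb
      · omega
    rcases eq_or_lt_of_le hit with hieq | hilt
    · -- i = t : go through an intermediate diagram
      rw [hieq] at hiP hconP h1 hji hoth
      set V := C.psi hp hq U' with hVdef
      have hVj : V.f j = U'.f j := by rw [hVdef, psi_f, psiF_lt hjlt]
      have hVt : V.f t = U'.f t - min (U'.f t) m2 := by rw [hVdef, psi_f, psiF_t]
      have hVt2 : V.f (t+2) = min (U'.f t) m2 := by rw [hVdef, psi_f, psiF_t2]
      have hb : U'.f t + 1 ≤ m2 + P.mult t := by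
        have := T'.le_mult t
        rw [C.mult'_t ht1] at this
        omega
      have hVlt : V.f t < P.mult t := by
        have hmt := mult_pos_iff.2 (C.t_mem ht1)
        rcases Nat.le_total (U'.f t) m2 with hc | hc
        · rw [Nat.min_eq_left hc] at hVt; omega
        · rw [Nat.min_eq_right hc] at hVt; omega
      obtain ⟨W, e1, e2, e3⟩ := transfer_mem V hjP (C.t_mem ht1) (by omega) (by omega)
        (by rw [hVj]; omega) hVlt
      have hfib : ∀ x, phiF t W.f x = T'.f x := by
        intro x
        rcases Nat.eq_zero_or_pos x with rfl | hx0
        · rw [phiF_zero, f_zero' T']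
        rcases lt_trichotomy x t with hc | hc | hc
        · rw [phiF_lt hx0 hc]
          by_cases hxj : x = j
          · rw [hxj]
            rw [hVj] at e1
            omega
          · rw [← e3 x hxj (by omega), hVdef, psi_f, psiF_lt hc, hoth x (by omega) hxj]
        · rw [hc, phiF_t ht1, ← e3 (t+2) (by omega) (by omega), e2, hVt2, hVt]
          have := Nat.min_le_left (U'.f t) m2
          omega
        · rw [phiF_gt hx0 hc, ← e3 (x+2) (by omega) (by omega), hVdef, psi_f,
            psiF_gt (by omega)]
          have e : x + 2 - 2 = x := by omega
          rw [e, hoth x (by omega) (by omega)]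
      have hadj : (orbitGraph P p q).Adj W V :=
        adj_of_transfer hconP (fun x hxt hxj => (e3 x hxj hxt).symm) (Or.inl ⟨e2, e1⟩)
      exact (C.reach_psi_fiber hp hq T' W hfib).trans hadj.reachable
    · -- i < t : direct edge
      have hoth' : ∀ x, x ≠ i → x ≠ j → (C.psi hp hq T').f x = (C.psi hp hq U').f x := by
        intro x hx1 hx2
        rw [psi_f, psi_f]
        exact psiF_ext_at _ _ x (fun hc => hoth x hx1 hx2) (hoth t (by omega) (by omega))
          (fun hc => hoth (x-2) (by omega) (by omega))
      have hst1 : (C.psi hp hq T').f i = (C.psi hp hq U').f i + 1 := by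
        rw [psi_f, psi_f, psiF_lt hilt, psiF_lt hilt]; exact h1
      have hst2 : (C.psi hp hq U').f j = (C.psi hp hq T').f j + 1 := by
        rw [psi_f, psi_f, psiF_lt hjlt, psiF_lt hjlt]; exact h2
      exact (adj_of_transfer hconP hoth' (Or.inl ⟨hst1, hst2⟩)).reachable
  · -- t < i
    rcases le_or_gt j t with hjt | hjt
    · -- j ≤ t : j = t, t ≥ 1
      have ht1 : 1 ≤ t := by omega
      have hjeq : j = t := by
        have := hbet t (C.t_mem_parts' ht1)
        omega
      rw [hjeq] at hj h2 hji hoth hbet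
      have hi2P : i + 2 ∈ P.partsSet := C.big_lift hi hit
      by_cases hm2p : t + 2 ∈ P.partsSet
      · -- route through t + 2
        have hm2pos : 0 < m2 := mult_pos_iff.2 hm2p
        set V := C.psi hp hq U' with hVdef
        have hVt : V.f t = U'.f t - min (U'.f t) m2 := by rw [hVdef, psi_f, psiF_t]
        have hVt2 : V.f (t+2) = min (U'.f t) m2 := by rw [hVdef, psi_f, psiF_t2]
        have hVi : V.f (i+2) = U'.f i := by
          rw [hVdef, psi_f, psiF_gt (by omega)]
          have e : i + 2 - 2 = i := by omega
          rw [e]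
        have hf1 : 1 ≤ V.f (t+2) := by
          rw [hVt2]
          exact lt_min (by omega) hm2pos
        have hf2 : V.f (i+2) < P.mult (i+2) := by
          rw [hVi]
          have := T'.le_mult i
          rw [C.mult'_big hi1 hit] at this
          omega
        have hconP1 : Consec P (i+2) (t+2) := by
          refine ⟨hi2P, hm2p, by omega, fun x hx hb => ?_⟩
          have e : x - 2 + 2 = x := by omega
          have hx' : x - 2 ∈ P'.partsSet :=
            (C.mem_parts' (by omega)).2 (Or.inl ⟨by omega, by rw [e]; exact hx⟩)
          have := hbet (x-2) hx'
          omega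
        obtain ⟨W, e1, e2, e3⟩ := transfer_mem V hm2p hi2P (by omega) (by omega) hf1 hf2
        have hfib : ∀ x, phiF t W.f x = T'.f x := by
          intro x
          rcases Nat.eq_zero_or_pos x with rfl | hx0
          · rw [phiF_zero, f_zero' T']
          rcases lt_trichotomy x t with hc | hc | hc
          · rw [phiF_lt hx0 hc, ← e3 x (by omega) (by omega), hVdef, psi_f, psiF_lt hc,
              hoth x (by omega) (by omega)]
          · rw [hc, phiF_t ht1, ← e3 t (by omega) (by omega), hVt]
            rw [hVt2] at e1
            have hmle := Nat.min_le_left (U'.f t) m2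
            have hm1 : 1 ≤ min (U'.f t) m2 := lt_min (by omega) hm2pos
            omega
          · rw [phiF_gt hx0 hc]
            by_cases hxi : x = i
            · rw [hxi]
              rw [hVi] at e2
              omega
            · rw [← e3 (x+2) (by omega) (by omega), hVdef, psi_f, psiF_gt (by omega)]
              have e : x + 2 - 2 = x := by omega
              rw [e, hoth x (by omega) (by omega)]
        have hadj : (orbitGraph P p q).Adj V W :=
          adj_of_transfer hconP1 (fun x hxi hxt => e3 x hxt hxi) (Or.inr ⟨e2, e1⟩)
        exact (C.reach_psi_fiber hp hq T' W hfib).trans hadj.reachable.symm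
      · -- t + 2 not a part : direct edge at (i+2, t)
        have hm2z : m2 = 0 := mult_eq_zero hm2p
        have hconP : Consec P (i+2) t := by
          refine ⟨hi2P, C.t_mem ht1, by omega, fun x hx hb => ?_⟩
          have hx2 : x ≠ t + 2 := fun he => hm2p (he ▸ hx)
          rcases C.parts_gap hx with hc | hc
          · omega
          · have e : x - 2 + 2 = x := by omega
            have hx' : x - 2 ∈ P'.partsSet :=
              (C.mem_parts' (by omega)).2 (Or.inl ⟨by omega, by rw [e]; exact hx⟩)
            have := hbet (x-2) hx'
            omega
        have hoth' : ∀ x, x ≠ i + 2 → x ≠ t → (C.psi hp hq T').f x = (C.psi hp hq U').f x := by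
          intro x hx1 hx2
          rw [psi_f, psi_f]
          rcases lt_trichotomy x t with hc | hc | hc
          · rw [psiF_lt hc, psiF_lt hc, hoth x (by omega) hx2]
          · omega
          · by_cases hx1' : x = t + 1
            · rw [hx1', psiF_t1, psiF_t1]
            by_cases hx2' : x = t + 2
            · rw [hx2', psiF_t2, psiF_t2, mult_eq_zero hm2p]
              simp
            · rw [psiF_gt (by omega), psiF_gt (by omega), hoth (x-2) (by omega) (by omega)]
        have hst1 : (C.psi hp hq T').f (i+2) = (C.psi hp hq U').f (i+2) + 1 := by
          rw [psi_f, psi_f, psiF_gt (by omega), psiF_gt (by omega)]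
          have e : i + 2 - 2 = i := by omega
          rw [e]; exact h1
        have hst2 : (C.psi hp hq U').f t = (C.psi hp hq T').f t + 1 := by
          rw [psi_f, psi_f, psiF_t, psiF_t, mult_eq_zero hm2p, Nat.min_zero,
            Nat.min_zero]
          omega
        exact (adj_of_transfer hconP hoth' (Or.inl ⟨hst1, hst2⟩)).reachable
    · -- t < j : both coordinates big, direct edge at (i+2, j+2)
      have hi2P : i + 2 ∈ P.partsSet := C.big_lift hi hit
      have hj2P : j + 2 ∈ P.partsSet := C.big_lift hj hjt
      have hconP : Consec P (i+2) (j+2) := by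
        refine ⟨hi2P, hj2P, by omega, fun x hx hb => ?_⟩
        have e : x - 2 + 2 = x := by omega
        have hx' : x - 2 ∈ P'.partsSet :=
          (C.mem_parts' (by omega)).2 (Or.inl ⟨by omega, by rw [e]; exact hx⟩)
        have := hbet (x-2) hx'
        omega
      have hoth' : ∀ x, x ≠ i + 2 → x ≠ j + 2 → (C.psi hp hq T').f x = (C.psi hp hq U').f x := by
        intro x hx1 hx2
        rw [psi_f, psi_f]
        exact psiF_ext_at _ _ x (fun hc => hoth x (by omega) (by omega))
          (hoth t (by omega) (by omega)) (fun hc => hoth (x-2) (by omega) (by omega))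
      have hst1 : (C.psi hp hq T').f (i+2) = (C.psi hp hq U').f (i+2) + 1 := by
        rw [psi_f, psi_f, psiF_gt (by omega), psiF_gt (by omega)]
        have e : i + 2 - 2 = i := by omega
        rw [e]; exact h1
      have hst2 : (C.psi hp hq U').f (j+2) = (C.psi hp hq T').f (j+2) + 1 := by
        rw [psi_f, psi_f, psiF_gt (by omega), psiF_gt (by omega)]
        have e : j + 2 - 2 = j := by omega
        rw [e]; exact h2
      exact (adj_of_transfer hconP hoth' (Or.inl ⟨hst1, hst2⟩)).reachable

lemma reach_psi_rel (hp : h ≤ p) (hq : h ≤ q) {T' U' : SYD P' (p-h) (q-h)}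
    (hrel : AdjRel P' 1 T' U') :
    (orbitGraph P p q).Reachable (C.psi hp hq T') (C.psi hp hq U') := by
  rcases hrel with ⟨i, j, hcon, hoth, hmv | hmv⟩ | ⟨j, hmin, hoth, hmv | hmv⟩
  · exact C.reach_psi_transfer hp hq T' U' hcon hoth hmv.1 hmv.2
  · exact (C.reach_psi_transfer hp hq U' T' hcon (fun x a b => (hoth x a b).symm)
      hmv.1 hmv.2).symm
  · exact C.reach_psi_pump hp hq T' U' hmin hoth hmv
  · exact (C.reach_psi_pump hp hq U' T' hmin (fun x a => (hoth x a).symm) hmv).symm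

lemma reach_psi (hp : h ≤ p) (hq : h ≤ q) {T' U' : SYD P' (p-h) (q-h)}
    (hadj : (orbitGraph P' (p-h) (q-h)).Adj T' U') :
    (orbitGraph P p q).Reachable (C.psi hp hq T') (C.psi hp hq U') := by
  rw [orbitGraph, SimpleGraph.fromRel_adj] at hadj
  rcases hadj with ⟨_, hrel | hrel⟩
  · exact C.reach_psi_rel hp hq hrel
  · exact (C.reach_psi_rel hp hq hrel).symm

end Ctx
end Stmt7Aux

namespace Stmt7Aux

lemma reachable_map {V W : Type*} {G : SimpleGraph V} {H : SimpleGraph W} (f : V → W)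
    (hf : ∀ a b, G.Adj a b → H.Reachable (f a) (f b)) {a b : V} (hr : G.Reachable a b) :
    H.Reachable (f a) (f b) := by
  obtain ⟨w⟩ := hr
  induction w with
  | nil => exact SimpleGraph.Reachable.refl _
  | cons ha _ ih => exact (hf _ _ ha).trans ih

theorem main {P P' : PartitionData} {h t p q : ℕ} (C : Ctx P P' h t)
    (hn : P.boxSum = p + q) :
    Nat.card (orbitGraph P p q).ConnectedComponent
      = Nat.card (orbitGraph P' (p-h) (q-h)).ConnectedComponent := by
  by_cases hne : Nonempty (SYD P p q) ∨ Nonempty (SYD P' (p-h) (q-h))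
  · have hpq : h ≤ p ∧ h ≤ q := by
      rcases hne with hT | hT'
      · exact C.h_le_of_T hT.some
      · exact C.h_le_of_T' hn hT'.some
    obtain ⟨hp, hq⟩ := hpq
    refine Nat.card_congr
      ⟨Quot.lift (fun T => (orbitGraph P' (p-h) (q-h)).connectedComponentMk (C.phi T)) ?_,
        Quot.lift (fun T' => (orbitGraph P p q).connectedComponentMk (C.psi hp hq T')) ?_,
        ?_, ?_⟩
    · intro a b hr
      exact SimpleGraph.ConnectedComponent.sound
        (reachable_map _ (fun x y hxy => C.reach_phi hxy) hr)
    · intro a b hr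
      exact SimpleGraph.ConnectedComponent.sound
        (reachable_map _ (fun x y hxy => C.reach_psi hp hq hxy) hr)
    · refine Quot.ind (fun T => ?_)
      exact SimpleGraph.ConnectedComponent.sound
        (C.reach_fiber _ _ (fun x => by
          rw [Ctx.psi_f, C.phiF_psiF (C.phi T).f (C.phi T).le_mult, Ctx.phi_f]))
    · refine Quot.ind (fun T' => ?_)
      exact congrArg _ (C.phi_psi hp hq T')
  · rw [not_or] at hne
    obtain ⟨h1e, h2e⟩ := hne
    haveI : IsEmpty (SYD P p q) := not_nonempty_iff.1 h1e
    haveI : IsEmpty (SYD P' (p-h) (q-h)) := not_nonempty_iff.1 h2e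
    haveI : IsEmpty ((orbitGraph P p q).ConnectedComponent) := by
      constructor
      intro c
      obtain ⟨v, _⟩ := c.exists_rep
      exact isEmptyElim v
    haveI : IsEmpty ((orbitGraph P' (p-h) (q-h)).ConnectedComponent) := by
      constructor
      intro c
      obtain ⟨v, _⟩ := c.exists_rep
      exact isEmptyElim v
    rw [Nat.card_of_isEmpty, Nat.card_of_isEmpty]

end Stmt7Aux


/-- Removing two successive columns of the same length `h` from `λ` (so
`λ' = (λ_1 - 2, …, λ_h - 2, λ_{h+1}, …, λ_ℓ)`, discarding zero parts) does not
change the number of connected components of the orbit graph, the signature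
changing from `(p, q)` to `(p - h, q - h)`. -/
theorem stmt7 (P P' : PartitionData) (p q h : ℕ)
    (hn : P.boxSum = p + q) (h1 : 1 ≤ h) (hle : h ≤ P.len)
    (hcol : P.l (h + 1) + 2 ≤ P.l h)
    (hl1 : ∀ j, 1 ≤ j → j ≤ h → P'.l j = P.l j - 2)
    (hl2 : ∀ j, h < j → P'.l j = P.l j) :
    Nat.card (orbitGraph P p q).ConnectedComponent =
      Nat.card (orbitGraph P' (p - h) (q - h)).ConnectedComponent :=
  Stmt7Aux.main ⟨h1, hle, rfl, hcol, hl1, hl2⟩ hn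
end

section
/- Let λ be a partition of n = p + q with ℓ parts and assume syd(λ;p,q) ≠ ∅. Then syd(λ;p,q) has exactly one element (equivalently, the graph Γ(λ;p,q) consists of a single vertex) if and only if (a) all parts of λ are odd, and (b) either ℓ = |p − q| or all parts of λ are equal. -/
open Finset

section Aux

variable {P : PartitionData} {p q : ℕ}

lemma mem_partsSet_iff {i : ℕ} :
    i ∈ P.partsSet ↔ ∃ j, 1 ≤ j ∧ j ≤ P.len ∧ P.l j = i := by
  simp [PartitionData.partsSet, Finset.mem_image, Finset.mem_Icc]
  tauto

lemma mult_eq_zero_of_not_mem {i : ℕ} (h : i ∉ P.partsSet) : P.mult i = 0 := by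
  rw [PartitionData.mult, Finset.card_eq_zero, Finset.filter_eq_empty_iff]
  intro j hj hlj
  exact h (mem_partsSet_iff.2 ⟨j, (Finset.mem_Icc.1 hj).1, (Finset.mem_Icc.1 hj).2, hlj⟩)

lemma one_le_mult_of_mem {i : ℕ} (h : i ∈ P.partsSet) : 1 ≤ P.mult i := by
  obtain ⟨j, h1, h2, h3⟩ := mem_partsSet_iff.1 h
  rw [PartitionData.mult, Nat.one_le_iff_ne_zero, Ne, Finset.card_eq_zero,
    Finset.filter_eq_empty_iff]
  intro hemp
  exact hemp (Finset.mem_Icc.2 ⟨h1, h2⟩) h3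

lemma sum_mult_mul (g : ℕ → ℕ) :
    ∑ i ∈ P.partsSet, P.mult i * g i = ∑ j ∈ Finset.Icc 1 P.len, g (P.l j) := by
  rw [Finset.sum_comp g P.l]
  simp [PartitionData.partsSet, PartitionData.mult, mul_comm]

lemma sum_mult_eq_len : ∑ i ∈ P.partsSet, P.mult i = P.len := by
  have := sum_mult_mul (P := P) (fun _ => 1)
  simpa using this

lemma syd_f_eq_zero (T : SYD P p q) {i : ℕ} (h : i ∉ P.partsSet) : T.f i = 0 :=
  Nat.le_zero.1 (mult_eq_zero_of_not_mem h ▸ T.le_mult i)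

lemma syd_ext {T T' : SYD P p q} (h : T.f = T'.f) : T = T' := by
  cases T; cases T'; simpa using h

/-- termwise value for odd part -/
lemma odd_term {i f m : ℕ} (hodd : Odd i) (hf : f ≤ m) :
    f * ((i + 1) / 2) + (m - f) * (i / 2) = f + m * (i / 2) := by
  obtain ⟨c, rfl⟩ := hodd
  have h1 : (2 * c + 1 + 1) / 2 = c + 1 := by omega
  have h2 : (2 * c + 1) / 2 = c := by omega
  obtain ⟨d, rfl⟩ : ∃ d, m = f + d := ⟨m - f, by omega⟩
  rw [h1, h2, Nat.add_sub_cancel_left]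
  ring

lemma odd_term' {i f m : ℕ} (hodd : Odd i) (hf : f ≤ m) :
    f * (i / 2) + (m - f) * ((i + 1) / 2) = (m - f) + m * (i / 2) := by
  obtain ⟨c, rfl⟩ := hodd
  have h1 : (2 * c + 1 + 1) / 2 = c + 1 := by omega
  have h2 : (2 * c + 1) / 2 = c := by omega
  obtain ⟨d, rfl⟩ : ∃ d, m = f + d := ⟨m - f, by omega⟩
  rw [h1, h2, Nat.add_sub_cancel_left]
  ring

lemma plus_sum_eq (hodd : ∀ i ∈ P.partsSet, Odd i) (f : ℕ → ℕ)
    (hf : ∀ i ∈ P.partsSet, f i ≤ P.mult i) :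
    ∑ i ∈ P.partsSet, (f i * ((i + 1) / 2) + (P.mult i - f i) * (i / 2))
      = (∑ i ∈ P.partsSet, f i) + ∑ i ∈ P.partsSet, P.mult i * (i / 2) := by
  rw [← Finset.sum_add_distrib]
  exact Finset.sum_congr rfl fun i hi => odd_term (hodd i hi) (hf i hi)

lemma minus_sum_eq (hodd : ∀ i ∈ P.partsSet, Odd i) (f : ℕ → ℕ)
    (hf : ∀ i ∈ P.partsSet, f i ≤ P.mult i) :
    ∑ i ∈ P.partsSet, (f i * (i / 2) + (P.mult i - f i) * ((i + 1) / 2))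
      = (∑ i ∈ P.partsSet, (P.mult i - f i)) + ∑ i ∈ P.partsSet, P.mult i * (i / 2) := by
  rw [← Finset.sum_add_distrib]
  exact Finset.sum_congr rfl fun i hi => odd_term' (hodd i hi) (hf i hi)

lemma sum_f_add_sum_sub (f : ℕ → ℕ) (hf : ∀ i ∈ P.partsSet, f i ≤ P.mult i) :
    (∑ i ∈ P.partsSet, f i) + (∑ i ∈ P.partsSet, (P.mult i - f i)) = P.len := by
  rw [← Finset.sum_add_distrib, ← sum_mult_eq_len (P := P)]
  exact Finset.sum_congr rfl fun i hi => by
    have := hf i hi; omega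

/-- key sum identities for a SYD over a partition with all parts odd -/
lemma syd_sums (hodd : ∀ i ∈ P.partsSet, Odd i) (T : SYD P p q) :
    (∑ i ∈ P.partsSet, T.f i) + (∑ i ∈ P.partsSet, P.mult i * (i / 2)) = p ∧
    (∑ i ∈ P.partsSet, (P.mult i - T.f i)) + (∑ i ∈ P.partsSet, P.mult i * (i / 2)) = q := by
  constructor
  · rw [← plus_sum_eq hodd T.f (fun i _ => T.le_mult i)]; exact T.plus_eq
  · rw [← minus_sum_eq hodd T.f (fun i _ => T.le_mult i)]; exact T.minus_eq

lemma even_term {i f m : ℕ} (heven : Even i) (hf : f ≤ m) :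
    f * ((i + 1) / 2) + (m - f) * (i / 2) = m * (i / 2) := by
  obtain ⟨c, rfl⟩ := heven
  have h1 : (c + c + 1) / 2 = c := by omega
  have h2 : (c + c) / 2 = c := by omega
  rw [h1, h2, ← add_mul]
  congr 1
  omega

lemma even_term' {i f m : ℕ} (heven : Even i) (hf : f ≤ m) :
    f * (i / 2) + (m - f) * ((i + 1) / 2) = m * (i / 2) := by
  obtain ⟨c, rfl⟩ := heven
  have h1 : (c + c + 1) / 2 = c := by omega
  have h2 : (c + c) / 2 = c := by omega
  rw [h1, h2, ← add_mul]
  congr 1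
  omega

/-- If some part is even, there is a second, different SYD. -/
lemma exists_ne_of_even_part (T : SYD P p q) {i0 : ℕ} (hi0 : i0 ∈ P.partsSet)
    (heven : Even i0) : ∃ T' : SYD P p q, T' ≠ T := by
  classical
  set v : ℕ := if T.f i0 = 0 then 1 else T.f i0 - 1 with hv
  have hm1 : 1 ≤ P.mult i0 := one_le_mult_of_mem hi0
  have hmle : T.f i0 ≤ P.mult i0 := T.le_mult i0
  have hv_ne : v ≠ T.f i0 := by
    by_cases h : T.f i0 = 0 <;> simp [hv, h] <;> omega
  have hv_le : v ≤ P.mult i0 := by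
    by_cases h : T.f i0 = 0 <;> simp [hv, h] <;> omega
  refine ⟨⟨Function.update T.f i0 v, ?_, ?_, ?_⟩, ?_⟩
  · intro i
    by_cases h : i = i0
    · subst h; simpa using hv_le
    · rw [Function.update_of_ne h]; exact T.le_mult i
  · refine Eq.trans (Finset.sum_congr rfl fun i hi => ?_) T.plus_eq
    by_cases h : i = i0
    · subst h
      rw [Function.update_self, even_term heven hv_le, even_term heven hmle]
    · rw [Function.update_of_ne h]
  · refine Eq.trans (Finset.sum_congr rfl fun i hi => ?_) T.minus_eq
    by_cases h : i = i0
    · subst h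
      rw [Function.update_self, even_term' heven hv_le, even_term' heven hmle]
    · rw [Function.update_of_ne h]
  · intro hEq
    apply hv_ne
    have := congrArg (fun X : SYD P p q => X.f i0) hEq
    simpa using this

/-- If all parts are odd and we can move one `+`-row from part `r` to part `s`,
there is a second, different SYD. -/
lemma exists_ne_of_swap (hodd : ∀ i ∈ P.partsSet, Odd i) (T : SYD P p q)
    {r s : ℕ} (hr : r ∈ P.partsSet) (hs : s ∈ P.partsSet) (hrs : r ≠ s)
    (hfr : 1 ≤ T.f r) (hfs : T.f s < P.mult s) : ∃ T' : SYD P p q, T' ≠ T := by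
  classical
  set g : ℕ → ℕ := Function.update (Function.update T.f r (T.f r - 1)) s (T.f s + 1) with hg
  have hgr : g r = T.f r - 1 := by
    rw [hg, Function.update_of_ne hrs, Function.update_self]
  have hgs : g s = T.f s + 1 := by rw [hg, Function.update_self]
  have hgo : ∀ i, i ≠ r → i ≠ s → g i = T.f i := by
    intro i h1 h2
    rw [hg, Function.update_of_ne h2, Function.update_of_ne h1]
  have hgle : ∀ i ∈ P.partsSet, g i ≤ P.mult i := by
    intro i _
    by_cases h1 : i = s
    · subst h1; rw [hgs]; omega
    · by_cases h2 : i = r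
      · rw [h2, hgr]; have := T.le_mult r; omega
      · rw [hgo i h2 h1]; exact T.le_mult i
  have hgle' : ∀ i, g i ≤ P.mult i := by
    intro i
    by_cases h1 : i = s
    · subst h1; rw [hgs]; omega
    · by_cases h2 : i = r
      · rw [h2, hgr]; have := T.le_mult r; omega
      · rw [hgo i h2 h1]; exact T.le_mult i
  -- the total sum of g over the parts equals that of T.f
  have hsum : ∑ i ∈ P.partsSet, g i = ∑ i ∈ P.partsSet, T.f i := by
    have hr' : r ∈ P.partsSet \ {s} := Finset.mem_sdiff.2 ⟨hr, by simp [hrs]⟩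
    rw [hg, Finset.sum_update_of_mem hs, Finset.sum_update_of_mem hr']
    have e1 : ∑ i ∈ P.partsSet, T.f i
        = T.f s + ∑ i ∈ P.partsSet \ {s}, T.f i := by
      rw [Finset.sum_eq_sum_sdiff_singleton_add hs]; ring
    have e2 : ∑ i ∈ P.partsSet \ {s}, T.f i
        = T.f r + ∑ i ∈ (P.partsSet \ {s}) \ {r}, T.f i := by
      rw [Finset.sum_eq_sum_sdiff_singleton_add hr']; ring
    rw [e1, e2]
    omega
  have hsub : ∑ i ∈ P.partsSet, (P.mult i - g i) = ∑ i ∈ P.partsSet, (P.mult i - T.f i) := by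
    have h1 := sum_f_add_sum_sub (P := P) g hgle
    have h2 := sum_f_add_sum_sub (P := P) T.f (fun i _ => T.le_mult i)
    omega
  refine ⟨⟨g, hgle', ?_, ?_⟩, ?_⟩
  · rw [plus_sum_eq hodd g hgle, hsum, ← plus_sum_eq hodd T.f (fun i _ => T.le_mult i)]
    exact T.plus_eq
  · rw [minus_sum_eq hodd g hgle, hsub, ← minus_sum_eq hodd T.f (fun i _ => T.le_mult i)]
    exact T.minus_eq
  · intro hEq
    have := congrArg (fun X : SYD P p q => X.f r) hEq
    simp only at this
    rw [hgr] at this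
    omega

end Aux

/-- `syd(λ;p,q)` is a singleton (the orbit graph consists of a single vertex)
iff all parts of `λ` are odd, and either `ℓ(λ) = |p - q|` or all parts of `λ`
are equal. -/
theorem stmt8 (P : PartitionData) (p q : ℕ)
    (hn : P.boxSum = p + q) (hne : Nonempty (SYD P p q)) :
    Nat.card (SYD P p q) = 1 ↔
      ((∀ j, 1 ≤ j → j ≤ P.len → Odd (P.l j)) ∧
        ((P.len : ℤ) = |(p : ℤ) - (q : ℤ)| ∨
          ∀ j j', 1 ≤ j → j ≤ P.len → 1 ≤ j' → j' ≤ P.len → P.l j = P.l j')) := by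
  classical
  constructor
  · intro hcard
    obtain ⟨hsub, -⟩ := Nat.card_eq_one_iff_unique.1 hcard
    obtain ⟨T⟩ := hne
    have hodd : ∀ j, 1 ≤ j → j ≤ P.len → Odd (P.l j) := by
      intro j h1 h2
      by_contra hev
      rw [Nat.not_odd_iff_even] at hev
      obtain ⟨T', hT'⟩ := exists_ne_of_even_part T
        (mem_partsSet_iff.2 ⟨j, h1, h2, rfl⟩) hev
      exact hT' (hsub.elim T' T)
    refine ⟨hodd, ?_⟩
    by_cases hall : ∀ j j', 1 ≤ j → j ≤ P.len → 1 ≤ j' → j' ≤ P.len → P.l j = P.l j'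
    · exact Or.inr hall
    left
    push_neg at hall
    obtain ⟨j, j', hj1, hj2, hj'1, hj'2, hjj⟩ := hall
    have haD : P.l j ∈ P.partsSet := mem_partsSet_iff.2 ⟨j, hj1, hj2, rfl⟩
    have hbD : P.l j' ∈ P.partsSet := mem_partsSet_iff.2 ⟨j', hj'1, hj'2, rfl⟩
    have hoddD : ∀ i ∈ P.partsSet, Odd i := by
      intro i hi
      obtain ⟨j, h1, h2, rfl⟩ := mem_partsSet_iff.1 hi
      exact hodd j h1 h2
    obtain ⟨hp, hq⟩ := syd_sums hoddD T
    have hSM := sum_f_add_sum_sub (P := P) T.f (fun i _ => T.le_mult i)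
    set S := ∑ i ∈ P.partsSet, T.f i with hS
    set M := ∑ i ∈ P.partsSet, (P.mult i - T.f i) with hM
    have hpq : (p : ℤ) - q = (S : ℤ) - M := by
      rw [← hp, ← hq]; push_cast; ring
    rw [hpq]
    by_contra hne2
    have hSpos : 0 < S ∧ 0 < M := by
      rcases le_total ((S : ℤ)) ((M : ℤ)) with h | h
      · rw [abs_of_nonpos (by omega)] at hne2; omega
      · rw [abs_of_nonneg (by omega)] at hne2; omega
    obtain ⟨r, hrD, hr⟩ : ∃ r ∈ P.partsSet, 0 < T.f r := by
      by_contra h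
      push_neg at h
      have : S = 0 := Finset.sum_eq_zero fun i hi => by have := h i hi; omega
      omega
    obtain ⟨s, hsD, hs⟩ : ∃ s ∈ P.partsSet, T.f s < P.mult s := by
      by_contra h
      push_neg at h
      have : M = 0 := Finset.sum_eq_zero fun i hi => by have := h i hi; omega
      omega
    have key : ∃ r' s', r' ∈ P.partsSet ∧ s' ∈ P.partsSet ∧ r' ≠ s' ∧
        0 < T.f r' ∧ T.f s' < P.mult s' := by
      by_cases hrs : r = s
      · subst hrs
        set t : ℕ := if P.l j = r then P.l j' else P.l j with ht
        have htD : t ∈ P.partsSet := by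
          by_cases h : P.l j = r <;> simp [ht, h, haD, hbD]
        have htr : t ≠ r := by
          by_cases h : P.l j = r <;> simp [ht, h]
          rw [← h]; exact fun hh => hjj hh.symm
        by_cases hft : 0 < T.f t
        · exact ⟨t, r, htD, hrD, htr, hft, hs⟩
        · have h1 : T.f t < P.mult t := by
            have := one_le_mult_of_mem htD; omega
          exact ⟨r, t, hrD, htD, fun hh => htr hh.symm, hr, h1⟩
      · exact ⟨r, s, hrD, hsD, hrs, hr, hs⟩
    obtain ⟨r', s', hr'D, hs'D, hr's', hfr', hfs'⟩ := key
    obtain ⟨T', hT'⟩ := exists_ne_of_swap hoddD T hr'D hs'D hr's' hfr' hfs'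
    exact hT' (hsub.elim T' T)
  · rintro ⟨hodd, hcase⟩
    have hoddD : ∀ i ∈ P.partsSet, Odd i := by
      intro i hi
      obtain ⟨j, h1, h2, rfl⟩ := mem_partsSet_iff.1 hi
      exact hodd j h1 h2
    rw [Nat.card_eq_one_iff_unique]
    refine ⟨⟨fun T T' => ?_⟩, hne⟩
    apply syd_ext
    funext i
    by_cases hiD : i ∈ P.partsSet
    swap
    · rw [syd_f_eq_zero T hiD, syd_f_eq_zero T' hiD]
    obtain ⟨hp, hq⟩ := syd_sums hoddD T
    obtain ⟨hp', hq'⟩ := syd_sums hoddD T'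
    rcases hcase with hlen | hall
    · have hSM := sum_f_add_sum_sub (P := P) T.f (fun i _ => T.le_mult i)
      have hSM' := sum_f_add_sum_sub (P := P) T'.f (fun i _ => T'.le_mult i)
      have hzero : (∑ i ∈ P.partsSet, T.f i = 0 ∧ ∑ i ∈ P.partsSet, T'.f i = 0) ∨
          (∑ i ∈ P.partsSet, (P.mult i - T.f i) = 0 ∧
            ∑ i ∈ P.partsSet, (P.mult i - T'.f i) = 0) := by
        rcases abs_cases ((p : ℤ) - q) with ⟨h, -⟩ | ⟨h, -⟩ <;> rw [h] at hlen <;> omega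
      rcases hzero with ⟨h1, h2⟩ | ⟨h1, h2⟩
      · rw [Finset.sum_eq_zero_iff.1 h1 i hiD, Finset.sum_eq_zero_iff.1 h2 i hiD]
      · have e1 := Finset.sum_eq_zero_iff.1 h1 i hiD
        have e2 := Finset.sum_eq_zero_iff.1 h2 i hiD
        have := T.le_mult i
        have := T'.le_mult i
        omega
    · obtain ⟨j, hj1, hj2, rfl⟩ := mem_partsSet_iff.1 hiD
      have hD : P.partsSet = {P.l j} := by
        apply Finset.ext
        intro x
        simp only [Finset.mem_singleton]
        constructor
        · intro hx
          obtain ⟨j', h1, h2, rfl⟩ := mem_partsSet_iff.1 hx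
          exact hall j' j h1 h2 hj1 hj2
        · rintro rfl; exact hiD
      have hS : ∑ i ∈ P.partsSet, T.f i = ∑ i ∈ P.partsSet, T'.f i := by omega
      rw [hD, Finset.sum_singleton, Finset.sum_singleton] at hS
      exact hS
end

section
/- Let λ = (λ_1 ≥ λ_2 ≥ ⋯ ≥ λ_ℓ) be a partition of n = p + q and assume syd(λ;p,q) ≠ ∅. Then the graph Γ(λ;p,q) is connected if and only if there exists 0 ≤ r ≤ ℓ such that λ_1, …, λ_r are all odd and λ_{r+1}, …, λ_ℓ are all even (the cases r = 0 and r = ℓ, i.e., all parts even or all parts odd, being allowed). -/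
open Finset

-- ====== auxiliary development ======
namespace SYDAux

variable {P : PartitionData} {p q : ℕ}

theorem antitone' (P : PartitionData) {j k : ℕ} (h1 : 1 ≤ j) (h2 : j ≤ k) :
    P.l k ≤ P.l j := by
  obtain ⟨d, rfl⟩ := Nat.exists_eq_add_of_le h2
  clear h2
  induction d with
  | zero => exact le_rfl
  | succ d ih =>
      have := P.anti (j + d) (by omega)
      calc P.l (j + (d+1)) = P.l ((j + d) + 1) := by ring_nf
        _ ≤ P.l (j + d) := this
        _ ≤ P.l j := ih

theorem mem_partsSet {i : ℕ} : i ∈ P.partsSet ↔ ∃ j, 1 ≤ j ∧ j ≤ P.len ∧ P.l j = i := by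
  simp [PartitionData.partsSet, Finset.mem_image, Finset.mem_Icc, and_assoc]

theorem mult_pos {i : ℕ} (h : i ∈ P.partsSet) : 0 < P.mult i := by
  obtain ⟨j, h1, h2, h3⟩ := mem_partsSet.mp h
  have : j ∈ (Finset.Icc 1 P.len).filter (fun j => P.l j = i) := by
    simp [Finset.mem_Icc, h1, h2, h3]
  exact Finset.card_pos.mpr ⟨j, this⟩

theorem mult_eq_zero {i : ℕ} (h : i ∉ P.partsSet) : P.mult i = 0 := by
  rw [PartitionData.mult, Finset.card_eq_zero, Finset.filter_eq_empty_iff]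
  intro j hj hlj
  exact h (mem_partsSet.mpr ⟨j, (Finset.mem_Icc.mp hj).1, (Finset.mem_Icc.mp hj).2, hlj⟩)

theorem SYD.ext' {T T' : SYD P p q} (h : T.f = T'.f) : T = T' := by
  cases T; cases T'; cases h; rfl

theorem f_zero_outside (T : SYD P p q) {x : ℕ} (h : x ∉ P.partsSet) : T.f x = 0 :=
  Nat.le_zero.mp (mult_eq_zero h ▸ T.le_mult x)

theorem term_plus (i f m : ℕ) (h : f ≤ m) :
    f * ((i + 1) / 2) + (m - f) * (i / 2) = m * (i / 2) + f * (i % 2) := by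
  have h1 : (i + 1) / 2 = i / 2 + i % 2 := by omega
  rw [h1, Nat.mul_add, Nat.sub_mul]
  have h2 : f * (i / 2) ≤ m * (i / 2) := Nat.mul_le_mul_right _ h
  omega

theorem term_minus (i f m : ℕ) (h : f ≤ m) :
    f * (i / 2) + (m - f) * ((i + 1) / 2) = m * (i / 2) + (m - f) * (i % 2) := by
  have h1 : (i + 1) / 2 = i / 2 + i % 2 := by omega
  rw [h1, Nat.mul_add, Nat.sub_mul]
  have h2 : f * (i / 2) ≤ m * (i / 2) := Nat.mul_le_mul_right _ h
  omega

theorem plus_decomp (T : SYD P p q) :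
    (∑ i ∈ P.partsSet, P.mult i * (i / 2)) + ∑ i ∈ P.partsSet, T.f i * (i % 2) = p := by
  have h1 : ∑ i ∈ P.partsSet, (T.f i * ((i + 1) / 2) + (P.mult i - T.f i) * (i / 2))
      = (∑ i ∈ P.partsSet, P.mult i * (i / 2)) + ∑ i ∈ P.partsSet, T.f i * (i % 2) := by
    rw [← Finset.sum_add_distrib]
    exact Finset.sum_congr rfl fun i _ => term_plus i (T.f i) (P.mult i) (T.le_mult i)
  rw [← h1]; exact T.plus_eq

theorem pOdd_const (T T' : SYD P p q) :
    ∑ i ∈ P.partsSet, T.f i * (i % 2) = ∑ i ∈ P.partsSet, T'.f i * (i % 2) := by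
  have h1 := plus_decomp T
  have h2 := plus_decomp T'
  omega

theorem minus_decomp (T : SYD P p q) :
    (∑ i ∈ P.partsSet, P.mult i * (i / 2))
      + ∑ i ∈ P.partsSet, (P.mult i - T.f i) * (i % 2) = q := by
  have h1 : ∑ i ∈ P.partsSet, (T.f i * (i / 2) + (P.mult i - T.f i) * ((i + 1) / 2))
      = (∑ i ∈ P.partsSet, P.mult i * (i / 2))
          + ∑ i ∈ P.partsSet, (P.mult i - T.f i) * (i % 2) := by
    rw [← Finset.sum_add_distrib]
    exact Finset.sum_congr rfl fun i _ => term_minus i (T.f i) (P.mult i) (T.le_mult i)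
  rw [← h1]; exact T.minus_eq

theorem sub_sum_eq {g f : ℕ → ℕ} (hg : ∀ i, g i ≤ P.mult i) (hf : ∀ i, f i ≤ P.mult i)
    (h : ∑ i ∈ P.partsSet, g i * (i % 2) = ∑ i ∈ P.partsSet, f i * (i % 2)) :
    ∑ i ∈ P.partsSet, (P.mult i - g i) * (i % 2)
      = ∑ i ∈ P.partsSet, (P.mult i - f i) * (i % 2) := by
  have key : ∀ (h' : ℕ → ℕ), (∀ i, h' i ≤ P.mult i) →
      (∑ i ∈ P.partsSet, (P.mult i - h' i) * (i % 2)) + ∑ i ∈ P.partsSet, h' i * (i % 2)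
        = ∑ i ∈ P.partsSet, P.mult i * (i % 2) := by
    intro h' hh
    rw [← Finset.sum_add_distrib]
    refine Finset.sum_congr rfl fun i _ => ?_
    rw [Nat.sub_mul]
    have := Nat.mul_le_mul_right (i % 2) (hh i)
    omega
  have k1 := key g hg
  have k2 := key f hf
  omega

/-- Build a new SYD from `T` by replacing `f` with `g`, provided `g` has the same
odd-weighted sum. -/
def mkSYD (T : SYD P p q) (g : ℕ → ℕ) (hle : ∀ i, g i ≤ P.mult i)
    (hodd : ∑ i ∈ P.partsSet, g i * (i % 2) = ∑ i ∈ P.partsSet, T.f i * (i % 2)) :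
    SYD P p q where
  f := g
  le_mult := hle
  plus_eq := by
    have h1 : ∑ i ∈ P.partsSet, (g i * ((i + 1) / 2) + (P.mult i - g i) * (i / 2))
        = (∑ i ∈ P.partsSet, P.mult i * (i / 2)) + ∑ i ∈ P.partsSet, g i * (i % 2) := by
      rw [← Finset.sum_add_distrib]
      exact Finset.sum_congr rfl fun i _ => term_plus i (g i) (P.mult i) (hle i)
    rw [h1, hodd, plus_decomp T]
  minus_eq := by
    have h1 : ∑ i ∈ P.partsSet, (g i * (i / 2) + (P.mult i - g i) * ((i + 1) / 2))
        = (∑ i ∈ P.partsSet, P.mult i * (i / 2))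
            + ∑ i ∈ P.partsSet, (P.mult i - g i) * (i % 2) := by
      rw [← Finset.sum_add_distrib]
      exact Finset.sum_congr rfl fun i _ => term_minus i (g i) (P.mult i) (hle i)
    rw [h1, sub_sum_eq hle T.le_mult hodd, minus_decomp T]

theorem sum_erase2 {s : Finset ℕ} {i j : ℕ} (hij : i ≠ j) (hi : i ∈ s) (hj : j ∈ s)
    (F : ℕ → ℕ) :
    ∑ x ∈ s, F x = F i + F j + ∑ x ∈ (s.erase i).erase j, F x := by
  have hj' : j ∈ s.erase i := Finset.mem_erase.mpr ⟨fun h => hij h.symm, hj⟩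
  rw [← Finset.sum_erase_add s F hi, ← Finset.sum_erase_add (s.erase i) F hj']
  omega

theorem adjRel_ne {T T' : SYD P p q} (h : AdjRel P 1 T T') : T ≠ T' := by
  intro he
  subst he
  rcases h with ⟨i, j, _, _, h | h⟩ | ⟨j, _, _, h | h⟩ <;> omega

theorem adjRel_symm {T T' : SYD P p q} (h : AdjRel P 1 T T') : AdjRel P 1 T' T := by
  rcases h with ⟨i, j, hc, ho, hpm⟩ | ⟨j, hm, ho, hpm⟩
  · exact Or.inl ⟨i, j, hc, fun x h1 h2 => (ho x h1 h2).symm, hpm.symm⟩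
  · exact Or.inr ⟨j, hm, fun x h1 => (ho x h1).symm, hpm.symm⟩

theorem reachable_inv (I : SYD P p q → ℕ)
    (h : ∀ T T' : SYD P p q, AdjRel P 1 T T' → I T = I T')
    {T T' : SYD P p q} (hr : (orbitGraph P p q).Reachable T T') : I T = I T' := by
  obtain ⟨w⟩ := hr
  induction w with
  | nil => rfl
  | cons ha _ ih =>
      rw [orbitGraph, SimpleGraph.fromRel_adj] at ha
      rcases ha.2 with h1 | h1
      · exact (h _ _ h1).trans ih
      · exact (h _ _ (adjRel_symm h1)).trans ih

end SYDAux

namespace SYDAux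

variable {P : PartitionData} {p q : ℕ}

/-- The invariant used in the "only if" direction: the number of `+`-leading rows
among even parts larger than a fixed odd part `t`.  It is preserved by every edge. -/
theorem edge_inv (t : ℕ) (htS : t ∈ P.partsSet) (ht : t % 2 = 1)
    {T T' : SYD P p q} (h : AdjRel P 1 T T') :
    ∑ x ∈ P.partsSet.filter (fun x => t < x ∧ x % 2 = 0), T.f x
      = ∑ x ∈ P.partsSet.filter (fun x => t < x ∧ x % 2 = 0), T'.f x := by
  set A := P.partsSet.filter (fun x => t < x ∧ x % 2 = 0) with hA
  have hmemA : ∀ x, x ∈ A ↔ x ∈ P.partsSet ∧ t < x ∧ x % 2 = 0 := by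
    intro x; simp [hA]
  rcases h with ⟨i, j, ⟨hiS, hjS, hji, hbet⟩, hoth, hpm⟩ | ⟨j, ⟨hjS, hjmin⟩, hoth, hpm⟩
  · have hij : i ≠ j := Nat.ne_of_gt hji
    -- parity of i and j agree
    have key : T.f i * (i % 2) + T.f j * (j % 2) = T'.f i * (i % 2) + T'.f j * (j % 2) := by
      have hP := pOdd_const T T'
      rw [sum_erase2 hij hiS hjS (fun x => T.f x * (x % 2)),
          sum_erase2 hij hiS hjS (fun x => T'.f x * (x % 2))] at hP
      have hrest : ∑ x ∈ (P.partsSet.erase i).erase j, T.f x * (x % 2)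
          = ∑ x ∈ (P.partsSet.erase i).erase j, T'.f x * (x % 2) := by
        refine Finset.sum_congr rfl fun x hx => ?_
        have h1 := (Finset.mem_erase.mp hx).1
        have h2 := (Finset.mem_erase.mp (Finset.mem_erase.mp hx).2).1
        rw [hoth x h2 h1]
      omega
    have hpar : i % 2 = j % 2 := by
      rcases hpm with ⟨h1, h2⟩ | ⟨h1, h2⟩ <;>
        rw [h1, h2] at key <;> rw [Nat.add_mul, one_mul, Nat.add_mul, one_mul] at key <;> omega
    by_cases hi2 : i % 2 = 0
    · have hj2 : j % 2 = 0 := hpar ▸ hi2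
      have hti : t ≠ i := fun h => by rw [← h] at hi2; omega
      have htj : t ≠ j := fun h => by rw [← h] at hj2; omega
      by_cases htlt : t < j
      · -- both i and j in A
        have hiA : i ∈ A := (hmemA i).mpr ⟨hiS, lt_trans htlt hji, hi2⟩
        have hjA : j ∈ A := (hmemA j).mpr ⟨hjS, htlt, hj2⟩
        rw [sum_erase2 hij hiA hjA T.f, sum_erase2 hij hiA hjA T'.f]
        have hrest : ∑ x ∈ (A.erase i).erase j, T.f x = ∑ x ∈ (A.erase i).erase j, T'.f x := by
          refine Finset.sum_congr rfl fun x hx => ?_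
          have h1 := (Finset.mem_erase.mp hx).1
          have h2 := (Finset.mem_erase.mp (Finset.mem_erase.mp hx).2).1
          exact hoth x h2 h1
        rcases hpm with ⟨h1, h2⟩ | ⟨h1, h2⟩ <;> omega
      · -- j < t, hence i ≤ t, so neither is in A
        have hjt : j < t := lt_of_le_of_ne (Nat.le_of_not_lt htlt) htj.symm
        have hit : ¬ t < i := fun hlt => hbet t htS ⟨hjt, hlt⟩
        refine Finset.sum_congr rfl fun x hx => ?_
        obtain ⟨hxS, hxt, hx2⟩ := (hmemA x).mp hx
        exact hoth x (fun he => hit (he ▸ hxt)) (fun he => (Nat.lt_irrefl t) (lt_trans hxt (he ▸ hjt)))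
    · -- i, j odd: neither in A
      have hi2' : i % 2 = 1 := by omega
      have hj2' : j % 2 = 1 := by omega
      refine Finset.sum_congr rfl fun x hx => ?_
      obtain ⟨hxS, hxt, hx2⟩ := (hmemA x).mp hx
      exact hoth x (fun he => by rw [he] at hx2; omega) (fun he => by rw [he] at hx2; omega)
  · -- min-part move
    have key : T.f j * (j % 2) = T'.f j * (j % 2) := by
      have hP := pOdd_const T T'
      rw [← Finset.sum_erase_add P.partsSet (fun x => T.f x * (x % 2)) hjS,
          ← Finset.sum_erase_add P.partsSet (fun x => T'.f x * (x % 2)) hjS] at hP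
      have hrest : ∑ x ∈ P.partsSet.erase j, T.f x * (x % 2)
          = ∑ x ∈ P.partsSet.erase j, T'.f x * (x % 2) := by
        refine Finset.sum_congr rfl fun x hx => ?_
        rw [hoth x (Finset.mem_erase.mp hx).1]
      omega
    have hpar : j % 2 = 0 := by
      rcases hpm with h1 | h1 <;> rw [h1] at key <;>
        rw [Nat.add_mul, one_mul] at key <;> omega
    refine Finset.sum_congr rfl fun x hx => ?_
    obtain ⟨hxS, hxt, hx2⟩ := (hmemA x).mp hx
    have hjt : j ≤ t := hjmin t htS
    exact hoth x (fun he => by subst he; omega)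

end SYDAux

namespace SYDAux

variable {P : PartitionData} {p q : ℕ}

theorem forward (hne : Nonempty (SYD P p q))
    (hconn : (orbitGraph P p q).Connected) :
    ∃ r, r ≤ P.len ∧ (∀ j, 1 ≤ j → j ≤ r → Odd (P.l j)) ∧
      ∀ j, r < j → j ≤ P.len → Even (P.l j) := by
  by_contra hcond
  set Od := (Finset.Icc 1 P.len).filter (fun j => Odd (P.l j)) with hOd
  by_cases hOdne : Od.Nonempty
  · set r₀ := Od.max' hOdne with hr₀
    have hr₀mem : r₀ ∈ Od := Od.max'_mem hOdne
    have hr₀Icc : r₀ ∈ Finset.Icc 1 P.len := (Finset.mem_filter.mp hr₀mem).1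
    have hr₀odd : Odd (P.l r₀) := (Finset.mem_filter.mp hr₀mem).2
    have h1 : 1 ≤ r₀ := (Finset.mem_Icc.mp hr₀Icc).1
    have h2 : r₀ ≤ P.len := (Finset.mem_Icc.mp hr₀Icc).2
    have hupper : ∀ j, r₀ < j → j ≤ P.len → Even (P.l j) := by
      intro j hj1 hj2
      rw [← Nat.not_odd_iff_even]
      intro hodd
      have : j ∈ Od := Finset.mem_filter.mpr ⟨Finset.mem_Icc.mpr ⟨by omega, hj2⟩, hodd⟩
      exact absurd (Od.le_max' j this) (by omega)
    have hfail : ¬ ∀ j, 1 ≤ j → j ≤ r₀ → Odd (P.l j) := by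
      intro hall
      exact hcond ⟨r₀, h2, hall, hupper⟩
    push_neg at hfail
    obtain ⟨j₁, hj1, hj2, hj3⟩ := hfail
    have hj3' : Even (P.l j₁) := Nat.not_odd_iff_even.mp hj3
    set t := P.l r₀ with htdef
    set e := P.l j₁ with hedef
    have htS : t ∈ P.partsSet := mem_partsSet.mpr ⟨r₀, h1, h2, rfl⟩
    have heS : e ∈ P.partsSet := mem_partsSet.mpr ⟨j₁, hj1, le_trans hj2 h2, rfl⟩
    have ht2 : t % 2 = 1 := Nat.odd_iff.mp hr₀odd
    have he2 : e % 2 = 0 := Nat.even_iff.mp hj3'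
    have hte : t < e := by
      have := antitone' P hj1 hj2
      have hne' : t ≠ e := fun h => by rw [h] at ht2; omega
      omega
    obtain ⟨T⟩ := hne
    -- build a second SYD differing only at the even part e
    have hmpos : 0 < P.mult e := mult_pos heS
    by_cases hfe : T.f e < P.mult e
    · set g : ℕ → ℕ := fun x => if x = e then T.f e + 1 else T.f x with hg
      have hle : ∀ i, g i ≤ P.mult i := by
        intro i; by_cases hi : i = e
        · subst hi; simp only [hg, if_pos rfl]; omega
        · simp only [hg, if_neg hi]; exact T.le_mult i
      have hodd : ∑ i ∈ P.partsSet, g i * (i % 2) = ∑ i ∈ P.partsSet, T.f i * (i % 2) := by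
        refine Finset.sum_congr rfl fun x hx => ?_
        by_cases hxe : x = e
        · subst hxe; simp only [hg, if_pos rfl, he2, Nat.mul_zero]
        · simp only [hg, if_neg hxe]
      set T₂ := mkSYD T g hle hodd with hT₂
      have heA : e ∈ P.partsSet.filter (fun x => t < x ∧ x % 2 = 0) :=
        Finset.mem_filter.mpr ⟨heS, hte, he2⟩
      have hinv := reachable_inv
        (fun T : SYD P p q => ∑ x ∈ P.partsSet.filter (fun x => t < x ∧ x % 2 = 0), T.f x)
        (fun T T' h => edge_inv t htS ht2 h) (hconn.preconnected T T₂)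
      rw [← Finset.sum_erase_add _ T.f heA, ← Finset.sum_erase_add _ T₂.f heA] at hinv
      have hrest : ∑ x ∈ (P.partsSet.filter (fun x => t < x ∧ x % 2 = 0)).erase e, T.f x
          = ∑ x ∈ (P.partsSet.filter (fun x => t < x ∧ x % 2 = 0)).erase e, T₂.f x := by
        refine Finset.sum_congr rfl fun x hx => ?_
        have hxe := (Finset.mem_erase.mp hx).1
        show T.f x = g x
        simp only [hg, if_neg hxe]
      have : T₂.f e = T.f e + 1 := by show g e = T.f e + 1; simp [hg]
      omega
    · have hfe' : T.f e = P.mult e := le_antisymm (T.le_mult e) (Nat.le_of_not_lt hfe)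
      set g : ℕ → ℕ := fun x => if x = e then T.f e - 1 else T.f x with hg
      have hle : ∀ i, g i ≤ P.mult i := by
        intro i; by_cases hi : i = e
        · subst hi; simp only [hg, if_pos rfl]; omega
        · simp only [hg, if_neg hi]; exact T.le_mult i
      have hodd : ∑ i ∈ P.partsSet, g i * (i % 2) = ∑ i ∈ P.partsSet, T.f i * (i % 2) := by
        refine Finset.sum_congr rfl fun x hx => ?_
        by_cases hxe : x = e
        · subst hxe; simp only [hg, if_pos rfl, he2, Nat.mul_zero]
        · simp only [hg, if_neg hxe]
      set T₂ := mkSYD T g hle hodd with hT₂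
      have heA : e ∈ P.partsSet.filter (fun x => t < x ∧ x % 2 = 0) :=
        Finset.mem_filter.mpr ⟨heS, hte, he2⟩
      have hinv := reachable_inv
        (fun T : SYD P p q => ∑ x ∈ P.partsSet.filter (fun x => t < x ∧ x % 2 = 0), T.f x)
        (fun T T' h => edge_inv t htS ht2 h) (hconn.preconnected T T₂)
      rw [← Finset.sum_erase_add _ T.f heA, ← Finset.sum_erase_add _ T₂.f heA] at hinv
      have hrest : ∑ x ∈ (P.partsSet.filter (fun x => t < x ∧ x % 2 = 0)).erase e, T.f x
          = ∑ x ∈ (P.partsSet.filter (fun x => t < x ∧ x % 2 = 0)).erase e, T₂.f x := by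
        refine Finset.sum_congr rfl fun x hx => ?_
        have hxe := (Finset.mem_erase.mp hx).1
        show T.f x = g x
        simp only [hg, if_neg hxe]
      have : T₂.f e = T.f e - 1 := by show g e = T.f e - 1; simp [hg]
      omega
  · -- no odd parts: r = 0 works
    apply hcond
    refine ⟨0, Nat.zero_le _, fun j h1 h2 => absurd h2 (by omega), fun j hj1 hj2 => ?_⟩
    rw [← Nat.not_odd_iff_even]
    intro hodd
    exact hOdne ⟨j, Finset.mem_filter.mpr ⟨Finset.mem_Icc.mpr ⟨by omega, hj2⟩, hodd⟩⟩

end SYDAux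

namespace SYDAux

variable {P : PartitionData} {p q : ℕ}

/-- Weight of a coordinate: even parts are weighted by their rank from the bottom
among even parts; odd parts by their rank from the top among odd parts. -/
def wt (P : PartitionData) (i : ℕ) : ℕ :=
  if i % 2 = 0 then (P.partsSet.filter (fun x => x ≤ i ∧ x % 2 = 0)).card
  else (P.partsSet.filter (fun x => i ≤ x ∧ x % 2 = 1)).card

/-- The potential function on signed Young diagrams. -/
def Phi (T : SYD P p q) : ℕ := ∑ i ∈ P.partsSet, wt P i * T.f i

theorem wt_pos {i : ℕ} (h : i ∈ P.partsSet) : 0 < wt P i := by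
  rw [wt]
  by_cases h2 : i % 2 = 0
  · rw [if_pos h2]
    exact Finset.card_pos.mpr ⟨i, Finset.mem_filter.mpr ⟨h, le_rfl, h2⟩⟩
  · rw [if_neg h2]
    exact Finset.card_pos.mpr ⟨i, Finset.mem_filter.mpr ⟨h, le_rfl, by omega⟩⟩

theorem wt_lt_even {j e : ℕ} (hjS : j ∈ P.partsSet) (heS : e ∈ P.partsSet)
    (hj2 : j % 2 = 0) (he2 : e % 2 = 0) (hje : j < e) : wt P j < wt P e := by
  rw [wt, wt, if_pos hj2, if_pos he2]
  apply Finset.card_lt_card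
  constructor
  · intro x hx
    obtain ⟨h1, h2, h3⟩ := Finset.mem_filter.mp hx
    exact Finset.mem_filter.mpr ⟨h1, by omega, h3⟩
  · intro hsub
    have : e ∈ P.partsSet.filter (fun x => x ≤ j ∧ x % 2 = 0) :=
      hsub (Finset.mem_filter.mpr ⟨heS, le_rfl, he2⟩)
    have := (Finset.mem_filter.mp this).2.1
    omega

theorem wt_lt_odd {j a : ℕ} (hjS : j ∈ P.partsSet) (haS : a ∈ P.partsSet)
    (hj2 : j % 2 = 1) (ha2 : a % 2 = 1) (hja : j < a) : wt P a < wt P j := by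
  rw [wt, wt, if_neg (by omega : ¬ a % 2 = 0), if_neg (by omega : ¬ j % 2 = 0)]
  apply Finset.card_lt_card
  constructor
  · intro x hx
    obtain ⟨h1, h2, h3⟩ := Finset.mem_filter.mp hx
    exact Finset.mem_filter.mpr ⟨h1, by omega, h3⟩
  · intro hsub
    have : j ∈ P.partsSet.filter (fun x => a ≤ x ∧ x % 2 = 1) :=
      hsub (Finset.mem_filter.mpr ⟨hjS, le_rfl, hj2⟩)
    have := (Finset.mem_filter.mp this).2.1
    omega

/-- The canonical diagram: all even coordinates 0 and odd coordinates packed greedily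
from the top. -/
def Canon (T : SYD P p q) : Prop :=
  (∀ i ∈ P.partsSet, i % 2 = 0 → T.f i = 0) ∧
    ∀ i ∈ P.partsSet, ∀ j ∈ P.partsSet, i % 2 = 1 → j % 2 = 1 → j < i → 0 < T.f j →
      T.f i = P.mult i

theorem pOdd_as_filter (T : SYD P p q) :
    ∑ i ∈ P.partsSet, T.f i * (i % 2)
      = ∑ i ∈ P.partsSet.filter (fun x => x % 2 = 1), T.f i := by
  rw [Finset.sum_filter]
  refine Finset.sum_congr rfl fun x _ => ?_
  by_cases h : x % 2 = 1
  · rw [if_pos h, h, Nat.mul_one]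
  · rw [if_neg h, (by omega : x % 2 = 0), Nat.mul_zero]

theorem canon_aux {T T' : SYD P p q} (hC : Canon T) (hC' : Canon T')
    {i : ℕ} (hiS : i ∈ P.partsSet) (hodd : i % 2 = 1)
    (hmax : ∀ j ∈ P.partsSet, j % 2 = 1 → i < j → T.f j = T'.f j)
    (hlt : T.f i < T'.f i) : False := by
  have hflt : T.f i < P.mult i := lt_of_lt_of_le hlt (T'.le_mult i)
  have hzero : ∀ j ∈ P.partsSet, j % 2 = 1 → j < i → T.f j = 0 := by
    intro j hj hjo hji
    by_contra h0
    have := hC.2 i hiS j hj hodd hjo hji (Nat.pos_of_ne_zero h0)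
    omega
  set O := P.partsSet.filter (fun x => x % 2 = 1) with hO
  set Oge := O.filter (fun x => i ≤ x) with hOge
  have hiO : i ∈ O := Finset.mem_filter.mpr ⟨hiS, hodd⟩
  have hiOge : i ∈ Oge := Finset.mem_filter.mpr ⟨hiO, le_rfl⟩
  have h1 : ∑ x ∈ O, T.f x = ∑ x ∈ Oge, T.f x := by
    refine (Finset.sum_subset (Finset.filter_subset _ _) ?_).symm
    intro x hx hnx
    obtain ⟨hxS, hx2⟩ := Finset.mem_filter.mp hx
    have : ¬ i ≤ x := fun h => hnx (Finset.mem_filter.mpr ⟨hx, h⟩)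
    exact hzero x hxS hx2 (by omega)
  have h2 : ∑ x ∈ Oge, T.f x < ∑ x ∈ Oge, T'.f x := by
    apply Finset.sum_lt_sum
    · intro x hx
      obtain ⟨hxO, hxi⟩ := Finset.mem_filter.mp hx
      obtain ⟨hxS, hx2⟩ := Finset.mem_filter.mp hxO
      rcases Nat.lt_or_ge i x with h | h
      · rw [hmax x hxS hx2 h]
      · have : x = i := by omega
        subst this
        exact le_of_lt hlt
    · exact ⟨i, hiOge, hlt⟩
  have h3 : ∑ x ∈ Oge, T'.f x ≤ ∑ x ∈ O, T'.f x :=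
    Finset.sum_le_sum_of_subset (Finset.filter_subset _ _)
  have hP := pOdd_const T T'
  rw [pOdd_as_filter T, pOdd_as_filter T'] at hP
  rw [← hO] at hP
  omega

theorem canon_unique {T T' : SYD P p q} (hC : Canon T) (hC' : Canon T') : T = T' := by
  apply SYD.ext'
  funext x
  by_cases hxS : x ∈ P.partsSet
  case neg => rw [f_zero_outside T hxS, f_zero_outside T' hxS]
  by_cases hx2 : x % 2 = 0
  case pos => rw [hC.1 x hxS hx2, hC'.1 x hxS hx2]
  have hx2' : x % 2 = 1 := by omega
  by_contra hneq
  set D := P.partsSet.filter (fun i => i % 2 = 1 ∧ T.f i ≠ T'.f i) with hD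
  have hDne : D.Nonempty := ⟨x, Finset.mem_filter.mpr ⟨hxS, hx2', hneq⟩⟩
  obtain ⟨i, himem, hmaxD⟩ : ∃ i ∈ D, ∀ j ∈ D, j ≤ i :=
    ⟨D.max' hDne, D.max'_mem hDne, fun j hj => D.le_max' j hj⟩
  obtain ⟨hiS, hio, hine⟩ := Finset.mem_filter.mp himem
  have hmax : ∀ j ∈ P.partsSet, j % 2 = 1 → i < j → T.f j = T'.f j := by
    intro j hj hjo hij
    by_contra hne2
    have : j ∈ D := Finset.mem_filter.mpr ⟨hj, hjo, hne2⟩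
    have := hmaxD j this
    omega
  rcases Nat.lt_or_ge (T.f i) (T'.f i) with h | h
  · exact canon_aux hC hC' hiS hio hmax h
  · have h' : T'.f i < T.f i := by omega
    exact canon_aux hC' hC hiS hio (fun j hj hjo hij => (hmax j hj hjo hij).symm) h'

end SYDAux

namespace SYDAux

variable {P : PartitionData} {p q : ℕ}

theorem two_point_sum {s : Finset ℕ} {e j : ℕ} (he : e ∈ s) (hj : j ∈ s)
    (F G : ℕ → ℕ) (ce cj : ℕ)
    (hterm : ∀ x ∈ s, G x + (if x = e then ce else 0) = F x + (if x = j then cj else 0)) :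
    (∑ x ∈ s, G x) + ce = (∑ x ∈ s, F x) + cj := by
  have h1 : ∑ x ∈ s, (G x + if x = e then ce else 0)
      = ∑ x ∈ s, (F x + if x = j then cj else 0) := Finset.sum_congr rfl hterm
  rw [Finset.sum_add_distrib, Finset.sum_add_distrib,
      Finset.sum_ite_eq' s e (fun _ => ce), Finset.sum_ite_eq' s j (fun _ => cj),
      if_pos he, if_pos hj] at h1
  exact h1

theorem exists_dec
    (hOE : ∀ a ∈ P.partsSet, ∀ b ∈ P.partsSet, a % 2 = 1 → b % 2 = 0 → b < a)
    (T : SYD P p q) (hnc : ¬ Canon T) :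
    ∃ T₂ : SYD P p q, AdjRel P 1 T T₂ ∧ Phi T₂ < Phi T := by
  rw [Canon, not_and_or] at hnc
  rcases hnc with h | h
  · -- some even coordinate is positive
    push_neg at h
    obtain ⟨e₀, he₀S, he₀2, he₀f⟩ := h
    set E0 := P.partsSet.filter (fun x => x % 2 = 0 ∧ 0 < T.f x) with hE0
    have hE0ne : E0.Nonempty :=
      ⟨e₀, Finset.mem_filter.mpr ⟨he₀S, he₀2, Nat.pos_of_ne_zero he₀f⟩⟩
    obtain ⟨e, hemem, hemin⟩ : ∃ e ∈ E0, ∀ x ∈ E0, e ≤ x :=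
      ⟨E0.min' hE0ne, E0.min'_mem hE0ne, fun x hx => E0.min'_le x hx⟩
    obtain ⟨heS, he2, hef⟩ := Finset.mem_filter.mp hemem
    obtain ⟨c, hc⟩ : ∃ c, T.f e = c + 1 := ⟨T.f e - 1, by omega⟩
    by_cases hmin : ∀ x ∈ P.partsSet, e ≤ x
    · -- `e` is the minimal part: use the free move at the bottom
      set g : ℕ → ℕ := fun x => if x = e then c else T.f x with hg
      have hle : ∀ i, g i ≤ P.mult i := by
        intro i
        by_cases hi : i = e
        · subst hi
          have := T.le_mult i
          simp only [hg, eq_self_iff_true, if_true, if_pos rfl]; omega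
        · simp only [hg, eq_self_iff_true, if_true, if_neg hi]; exact T.le_mult i
      have hodd : ∑ i ∈ P.partsSet, g i * (i % 2) = ∑ i ∈ P.partsSet, T.f i * (i % 2) := by
        refine Finset.sum_congr rfl fun x _ => ?_
        by_cases hxe : x = e
        · subst hxe; simp only [hg, eq_self_iff_true, if_true, if_pos rfl, he2, Nat.mul_zero]
        · simp only [hg, eq_self_iff_true, if_true, if_neg hxe]
      refine ⟨mkSYD T g hle hodd, Or.inr ⟨e, ⟨heS, hmin⟩, fun x hx => ?_, Or.inl ?_⟩, ?_⟩
      · show T.f x = g x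
        simp only [hg, eq_self_iff_true, if_true, if_neg hx]
      · show T.f e = g e + 1
        simp only [hg, eq_self_iff_true, if_true, if_pos rfl]; omega
      · show (∑ i ∈ P.partsSet, wt P i * g i) < ∑ i ∈ P.partsSet, wt P i * T.f i
        apply Finset.sum_lt_sum
        · intro x hx
          by_cases hxe : x = e
          · subst hxe
            simp only [hg, eq_self_iff_true, if_true, if_pos rfl, hc]
            exact Nat.mul_le_mul_left _ (by omega)
          · simp only [hg, eq_self_iff_true, if_true, if_neg hxe]; exact le_rfl
        · refine ⟨e, heS, ?_⟩
          simp only [hg, eq_self_iff_true, if_true, if_pos rfl, hc]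
          exact mul_lt_mul_of_pos_left (by omega) (wt_pos heS)
    · -- there is a part below `e`: move a unit down to the next part
      push_neg at hmin
      obtain ⟨y, hyS, hye⟩ := hmin
      set B := P.partsSet.filter (fun x => x < e) with hB
      have hBne : B.Nonempty := ⟨y, Finset.mem_filter.mpr ⟨hyS, hye⟩⟩
      obtain ⟨j, hjmem, hjmax⟩ : ∃ j ∈ B, ∀ x ∈ B, x ≤ j :=
        ⟨B.max' hBne, B.max'_mem hBne, fun x hx => B.le_max' x hx⟩
      obtain ⟨hjS, hje⟩ := Finset.mem_filter.mp hjmem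
      have hjne : j ≠ e := by omega
      have hcons : Consec P e j := by
        refine ⟨heS, hjS, hje, fun x hx hcontra => ?_⟩
        have : x ∈ B := Finset.mem_filter.mpr ⟨hx, hcontra.2⟩
        have := hjmax x this
        omega
      have hj2 : j % 2 = 0 := by
        by_contra hj1
        have := hOE j hjS e heS (by omega) he2
        omega
      have hfj : T.f j = 0 := by
        by_contra h0
        have : j ∈ E0 := Finset.mem_filter.mpr ⟨hjS, hj2, Nat.pos_of_ne_zero h0⟩
        have := hemin j this
        omega
      set g : ℕ → ℕ := fun x => if x = e then c else if x = j then T.f j + 1 else T.f x with hg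
      have hle : ∀ i, g i ≤ P.mult i := by
        intro i
        by_cases hi : i = e
        · subst hi
          have := T.le_mult i
          simp only [hg, eq_self_iff_true, if_true, if_pos rfl]; omega
        · by_cases hij : i = j
          · subst hij
            have := mult_pos hjS
            simp only [hg, eq_self_iff_true, if_true, if_neg hi, if_pos rfl, hfj]; omega
          · simp only [hg, eq_self_iff_true, if_true, if_neg hi, if_neg hij]; exact T.le_mult i
      have hodd : ∑ i ∈ P.partsSet, g i * (i % 2) = ∑ i ∈ P.partsSet, T.f i * (i % 2) := by
        refine Finset.sum_congr rfl fun x _ => ?_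
        by_cases hxe : x = e
        · subst hxe; simp only [hg, eq_self_iff_true, if_true, if_pos rfl, he2, Nat.mul_zero]
        · by_cases hxj : x = j
          · subst hxj; simp only [hg, eq_self_iff_true, if_true, if_neg hxe, if_pos rfl, hj2, Nat.mul_zero]
          · simp only [hg, eq_self_iff_true, if_true, if_neg hxe, if_neg hxj]
      refine ⟨mkSYD T g hle hodd, Or.inl ⟨e, j, hcons, fun x hx1 hx2 => ?_, Or.inl ⟨?_, ?_⟩⟩, ?_⟩
      · show T.f x = g x
        simp only [hg, eq_self_iff_true, if_true, if_neg hx1, if_neg hx2]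
      · show T.f e = g e + 1
        simp only [hg, eq_self_iff_true, if_true, if_pos rfl]; omega
      · show g j = T.f j + 1
        simp only [hg, eq_self_iff_true, if_true, if_neg hjne, if_pos rfl]
      · show (∑ i ∈ P.partsSet, wt P i * g i) < ∑ i ∈ P.partsSet, wt P i * T.f i
        have hkey : (∑ x ∈ P.partsSet, wt P x * g x) + wt P e
            = (∑ x ∈ P.partsSet, wt P x * T.f x) + wt P j := by
          refine two_point_sum heS hjS _ _ _ _ fun x hx => ?_
          by_cases hxe : x = e
          · subst hxe
            simp only [hg, eq_self_iff_true, if_true, if_pos rfl, if_neg hjne.symm, hc]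
            ring
          · by_cases hxj : x = j
            · subst hxj
              simp only [hg, eq_self_iff_true, if_true, if_neg hxe, if_pos rfl]
              ring
            · simp only [hg, eq_self_iff_true, if_true, if_neg hxe, if_neg hxj]
        have hwlt : wt P j < wt P e := wt_lt_even hjS heS hj2 he2 hje
        omega
  · -- the odd coordinates are not greedily packed
    push_neg at h
    obtain ⟨i₁, hi₁S, j₁, hj₁S, hi₁o, hj₁o, hji₁, hfj₁, hfi₁⟩ := h
    have hfi₁' : T.f i₁ < P.mult i₁ := lt_of_le_of_ne (T.le_mult i₁) hfi₁
    set J := P.partsSet.filter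
      (fun j => j % 2 = 1 ∧ 0 < T.f j ∧ ∃ i ∈ P.partsSet, i % 2 = 1 ∧ j < i ∧ T.f i < P.mult i)
      with hJ
    have hJne : J.Nonempty :=
      ⟨j₁, Finset.mem_filter.mpr ⟨hj₁S, hj₁o, hfj₁, i₁, hi₁S, hi₁o, hji₁, hfi₁'⟩⟩
    obtain ⟨j₀, hjmem, hjmax⟩ : ∃ j ∈ J, ∀ x ∈ J, x ≤ j :=
      ⟨J.max' hJne, J.max'_mem hJne, fun x hx => J.le_max' x hx⟩
    obtain ⟨hj₀S, hj₀o, hfj₀, i₀, hi₀S, hi₀o, hji₀, hfi₀⟩ := Finset.mem_filter.mp hjmem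
    set U := P.partsSet.filter (fun x => j₀ < x) with hU
    have hUne : U.Nonempty := ⟨i₀, Finset.mem_filter.mpr ⟨hi₀S, hji₀⟩⟩
    obtain ⟨a, hamem, hamin⟩ : ∃ a ∈ U, ∀ x ∈ U, a ≤ x :=
      ⟨U.min' hUne, U.min'_mem hUne, fun x hx => U.min'_le x hx⟩
    obtain ⟨haS, hja⟩ := Finset.mem_filter.mp hamem
    have hane : a ≠ j₀ := by omega
    have hcons : Consec P a j₀ := by
      refine ⟨haS, hj₀S, hja, fun x hx hcontra => ?_⟩
      have : x ∈ U := Finset.mem_filter.mpr ⟨hx, hcontra.1⟩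
      have := hamin x this
      omega
    have ha2 : a % 2 = 1 := by
      by_contra ha1
      have := hOE j₀ hj₀S a haS hj₀o (by omega)
      omega
    have hfa : T.f a < P.mult a := by
      by_contra hge
      have hfa' : T.f a = P.mult a := le_antisymm (T.le_mult a) (Nat.le_of_not_lt hge)
      have hi₀a : a < i₀ := by
        rcases Nat.lt_or_ge a i₀ with h' | h'
        · exact h'
        · have : i₀ = a := by
            have := hamin i₀ (Finset.mem_filter.mpr ⟨hi₀S, hji₀⟩)
            omega
          subst this; omega
      have : a ∈ J := Finset.mem_filter.mpr
        ⟨haS, ha2, by have := mult_pos haS; omega, i₀, hi₀S, hi₀o, hi₀a, hfi₀⟩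
      have := hjmax a this
      omega
    obtain ⟨c, hc⟩ : ∃ c, T.f j₀ = c + 1 := ⟨T.f j₀ - 1, by omega⟩
    set g : ℕ → ℕ := fun x => if x = a then T.f a + 1 else if x = j₀ then c else T.f x with hg
    have hle : ∀ i, g i ≤ P.mult i := by
      intro i
      by_cases hi : i = a
      · subst hi; simp only [hg, eq_self_iff_true, if_true, if_pos rfl]; omega
      · by_cases hij : i = j₀
        · subst hij
          have := T.le_mult i
          simp only [hg, eq_self_iff_true, if_true, if_neg hi, if_pos rfl]; omega
        · simp only [hg, eq_self_iff_true, if_true, if_neg hi, if_neg hij]; exact T.le_mult i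
    have hodd : ∑ i ∈ P.partsSet, g i * (i % 2) = ∑ i ∈ P.partsSet, T.f i * (i % 2) := by
      have hkey : (∑ x ∈ P.partsSet, g x * (x % 2)) + 1
          = (∑ x ∈ P.partsSet, T.f x * (x % 2)) + 1 := by
        refine two_point_sum hj₀S haS _ _ 1 1 fun x hx => ?_
        by_cases hxa : x = a
        · subst hxa
          simp only [hg, eq_self_iff_true, if_true, if_pos rfl, if_neg hane, ha2]
          ring
        · by_cases hxj : x = j₀
          · subst hxj
            simp only [hg, eq_self_iff_true, if_true, if_neg hxa, if_pos rfl, hj₀o, hc]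
            ring
          · simp only [hg, eq_self_iff_true, if_true, if_neg hxa, if_neg hxj]
      omega
    refine ⟨mkSYD T g hle hodd, Or.inl ⟨a, j₀, hcons, fun x hx1 hx2 => ?_, Or.inr ⟨?_, ?_⟩⟩, ?_⟩
    · show T.f x = g x
      simp only [hg, eq_self_iff_true, if_true, if_neg hx1, if_neg hx2]
    · show g a = T.f a + 1
      simp only [hg, eq_self_iff_true, if_true, if_pos rfl]
    · show T.f j₀ = g j₀ + 1
      simp only [hg, eq_self_iff_true, if_true, if_neg hane.symm, if_pos rfl]; omega
    · show (∑ i ∈ P.partsSet, wt P i * g i) < ∑ i ∈ P.partsSet, wt P i * T.f i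
      have hkey : (∑ x ∈ P.partsSet, wt P x * g x) + wt P j₀
          = (∑ x ∈ P.partsSet, wt P x * T.f x) + wt P a := by
        refine two_point_sum hj₀S haS _ _ _ _ fun x hx => ?_
        by_cases hxa : x = a
        · subst hxa
          simp only [hg, eq_self_iff_true, if_true, if_pos rfl, if_neg hane]
          ring
        · by_cases hxj : x = j₀
          · subst hxj
            simp only [hg, eq_self_iff_true, if_true, if_neg hxa, if_pos rfl, hc]
            ring
          · simp only [hg, eq_self_iff_true, if_true, if_neg hxa, if_neg hxj]
      have hwlt : wt P a < wt P j₀ := wt_lt_odd hj₀S haS hj₀o ha2 hja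
      omega

end SYDAux

namespace SYDAux

variable {P : PartitionData} {p q : ℕ}

theorem reach
    (hOE : ∀ a ∈ P.partsSet, ∀ b ∈ P.partsSet, a % 2 = 1 → b % 2 = 0 → b < a) :
    ∀ n : ℕ, ∀ T T' : SYD P p q, Phi T + Phi T' ≤ n →
      (orbitGraph P p q).Reachable T T' := by
  intro n
  induction n using Nat.strong_induction_on with
  | _ n ih =>
    intro T T' hn
    by_cases hC : Canon T
    · by_cases hC' : Canon T'
      · rw [canon_unique hC hC']
      · obtain ⟨T₂, hadj, hlt⟩ := exists_dec hOE T' hC'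
        have h1 : (orbitGraph P p q).Reachable T T₂ :=
          ih (Phi T + Phi T₂) (by omega) T T₂ le_rfl
        have h2 : (orbitGraph P p q).Adj T' T₂ := by
          rw [orbitGraph, SimpleGraph.fromRel_adj]
          exact ⟨adjRel_ne hadj, Or.inl hadj⟩
        exact h1.trans h2.reachable.symm
    · obtain ⟨T₂, hadj, hlt⟩ := exists_dec hOE T hC
      have h2 : (orbitGraph P p q).Adj T T₂ := by
        rw [orbitGraph, SimpleGraph.fromRel_adj]
        exact ⟨adjRel_ne hadj, Or.inl hadj⟩
      exact h2.reachable.trans (ih (Phi T₂ + Phi T') (by omega) T₂ T' le_rfl)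

theorem backward (hne : Nonempty (SYD P p q))
    (hcond : ∃ r, r ≤ P.len ∧ (∀ j, 1 ≤ j → j ≤ r → Odd (P.l j)) ∧
      ∀ j, r < j → j ≤ P.len → Even (P.l j)) :
    (orbitGraph P p q).Connected := by
  obtain ⟨r, hr, hoddc, hevenc⟩ := hcond
  have hOE : ∀ a ∈ P.partsSet, ∀ b ∈ P.partsSet, a % 2 = 1 → b % 2 = 0 → b < a := by
    intro a haS b hbS ha hb
    obtain ⟨ja, hja1, hja2, hja3⟩ := mem_partsSet.mp haS
    obtain ⟨jb, hjb1, hjb2, hjb3⟩ := mem_partsSet.mp hbS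
    have hjar : ja ≤ r := by
      by_contra hgt
      have := hevenc ja (by omega) hja2
      rw [hja3, Nat.even_iff] at this
      omega
    have hjbr : r < jb := by
      by_contra hle
      have := hoddc jb hjb1 (by omega)
      rw [hjb3, Nat.odd_iff] at this
      omega
    have := antitone' P hja1 (by omega : ja ≤ jb)
    rw [hja3, hjb3] at this
    omega
  rw [SimpleGraph.connected_iff]
  exact ⟨fun T T' => reach hOE (Phi T + Phi T') T T' le_rfl, hne⟩

end SYDAux



/-- `Γ(λ;p,q)` is connected iff there is `0 ≤ r ≤ ℓ` such that
`λ_1, …, λ_r` are all odd and `λ_{r+1}, …, λ_ℓ` are all even. -/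
theorem stmt11 (P : PartitionData) (p q : ℕ)
    (hn : P.boxSum = p + q) (hne : Nonempty (SYD P p q)) :
    (orbitGraph P p q).Connected ↔
      ∃ r, r ≤ P.len ∧ (∀ j, 1 ≤ j → j ≤ r → Odd (P.l j)) ∧
        ∀ j, r < j → j ≤ P.len → Even (P.l j) :=
  ⟨fun hconn => SYDAux.forward hne hconn, fun hcond => SYDAux.backward hne hcond⟩
end
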